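/- arXiv:2605.30891 — 6 statements merged into one kernel-verified Lean document; each statement's English description precedes it below -/
import Mathlib

section
/- For every k ≥ 1, min_{0 ≤ i < k} ‖∇f(x_i)‖ ≤ (1/k) · (∑_{i=0}^{k−1} λ_i)^{1/p} · (2Δ + L ∑_{i=0}^{k−1} (L/λ_i)^{2/(p−2)})^{(p−1)/p}, for any choice of positive parameters λ_0, …, λ_{k−1}. -/
open scoped Classical

local notation "⟪" x ", " y "⟫" => @inner ℝ _ _ x y

lemma hor_descent
    {E : Type*} [NormedAddCommGroup E] [InnerProductSpace ℝ E] [CompleteSpace E]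
    (f : E → ℝ) (f' : E → E)
    (hf : ∀ y, HasGradientAt f (f' y) y)
    (L : ℝ) (hlip : ∀ y z, ‖f' y - f' z‖ ≤ L * ‖y - z‖)
    (x v : E) :
    f (x + v) ≤ f x + ⟪f' x, v⟫ + L / 2 * ‖v‖ ^ 2 := by
  set A : ℝ := ⟪f' x, v⟫ with hA
  set B : ℝ := L / 2 * ‖v‖ ^ 2 with hB
  set g : ℝ → ℝ := fun t => f (x + t • v) - t * A - t ^ 2 * B with hg
  have hderiv : ∀ t : ℝ, HasDerivAt g (⟪f' (x + t • v), v⟫ - A - 2 * t * B) t := by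
    intro t
    have hc : HasDerivAt (fun t : ℝ => x + t • v) v t := by
      simpa using ((hasDerivAt_id t).smul_const v).const_add x
    have h1 : HasDerivAt (fun t : ℝ => f (x + t • v)) ⟪f' (x + t • v), v⟫ t := by
      have := (hf (x + t • v)).hasFDerivAt.comp_hasDerivAt t hc
      simp at this
      exact this
    have h2 : HasDerivAt (fun t : ℝ => t * A) A t := by
      simpa using (hasDerivAt_id t).mul_const A
    have h3 : HasDerivAt (fun t : ℝ => t ^ 2 * B) (2 * t * B) t := by
      have := (hasDerivAt_pow 2 t).mul_const B
      simpa [mul_comm] using this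
    exact (h1.sub h2).sub h3
  have hanti : AntitoneOn g (Set.Icc (0:ℝ) 1) := by
    apply antitoneOn_of_deriv_nonpos (convex_Icc 0 1)
    · exact Continuous.continuousOn (continuous_iff_continuousAt.mpr
        fun t => (hderiv t).differentiableAt.continuousAt)
    · intro t ht
      exact (hderiv t).differentiableAt.differentiableWithinAt
    · intro t ht
      rw [interior_Icc] at ht
      rw [(hderiv t).deriv]
      have h1 : ⟪f' (x + t • v), v⟫ - A ≤ ‖f' (x + t • v) - f' x‖ * ‖v‖ := by
        rw [hA, ← inner_sub_left]
        exact real_inner_le_norm _ _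
      have h2 : ‖f' (x + t • v) - f' x‖ * ‖v‖ ≤ L * (t * ‖v‖) * ‖v‖ := by
        have := hlip (x + t • v) x
        have hsimp : ‖x + t • v - x‖ = t * ‖v‖ := by
          simp [norm_smul, abs_of_pos ht.1]
        rw [hsimp] at this
        exact mul_le_mul_of_nonneg_right (by linarith [this]) (norm_nonneg v)
      have : L * (t * ‖v‖) * ‖v‖ = 2 * t * B := by rw [hB]; ring
      linarith
  have h01 := hanti (Set.left_mem_Icc.mpr zero_le_one) (Set.right_mem_Icc.mpr zero_le_one)
    zero_le_one
  have hg0 : g 0 = f x := by simp [hg]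
  have hg1 : g 1 = f (x + v) - A - B := by simp [hg]
  rw [hg0, hg1] at h01
  linarith

lemma hor_key_scalar {L c a p : ℝ} (hL : 0 < L) (hc : 0 < c) (ha : 0 ≤ a) (hp : 2 < p) :
    L * a ^ (2:ℝ) ≤ c * a ^ p + L * (L / c) ^ (2 / (p - 2)) := by
  have hp2 : (0:ℝ) < p - 2 := by linarith
  have hLc : (0:ℝ) < L / c := div_pos hL hc
  rcases le_or_gt (L / c) (a ^ (p - 2)) with h | h
  · have h2 : L * a ^ (2:ℝ) ≤ c * (a ^ (p-2) * a ^ (2:ℝ)) := by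
      have := mul_le_mul_of_nonneg_right h (Real.rpow_nonneg ha 2)
      calc L * a ^ (2:ℝ) = c * (L / c * a ^ (2:ℝ)) := by field_simp
        _ ≤ c * (a ^ (p-2) * a ^ (2:ℝ)) := by
            exact mul_le_mul_of_nonneg_left this hc.le
    have h3 : a ^ (p-2) * a ^ (2:ℝ) = a ^ p := by
      rw [← Real.rpow_add' ha (by intro h0; linarith : p - 2 + 2 ≠ 0)]
      norm_num
    have h4 : 0 ≤ L * (L / c) ^ (2 / (p - 2)) :=
      mul_nonneg hL.le (Real.rpow_nonneg hLc.le _)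
    rw [h3] at h2
    linarith
  · have key : (a ^ (p-2)) ^ (2/(p-2)) = a ^ (2:ℝ) := by
      rw [← Real.rpow_mul ha]; congr 1; field_simp
    have h2 : a ^ (2:ℝ) ≤ (L / c) ^ (2 / (p-2)) := by
      rw [← key]
      exact Real.rpow_le_rpow (Real.rpow_nonneg ha _) h.le (by positivity)
    have h4 : 0 ≤ c * a ^ p := mul_nonneg hc.le (Real.rpow_nonneg ha _)
    nlinarith [mul_le_mul_of_nonneg_left h2 hL.le]

/-- General gradient-norm bound for higher-order regularized gradient descent:
for all `k ≥ 1`,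
`min_{0 ≤ i < k} ‖∇f(x_i)‖ ≤ (1/k) (∑_{i<k} λ_i)^{1/p} (2Δ + L ∑_{i<k} (L/λ_i)^{2/(p-2)})^{(p-1)/p}`. -/
theorem hor_gd_rate_general
    {E : Type*} [NormedAddCommGroup E] [InnerProductSpace ℝ E] [CompleteSpace E]
    (f : E → ℝ) (f' : E → E)
    (hf : ∀ y, HasGradientAt f (f' y) y)
    (L : ℝ) (hL : 0 < L)
    (hlip : ∀ y z, ‖f' y - f' z‖ ≤ L * ‖y - z‖)
    (hbdd : BddBelow (Set.range f))
    (p : ℝ) (hp : 2 < p)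
    (lam : ℕ → ℝ) (hlam : ∀ k, 0 < lam k)
    (x s : ℕ → E)
    (hs : ∀ k, s k = if f' (x k) = 0 then 0
      else -((lam k * ‖f' (x k)‖ ^ (p - 2)) ^ (-(1 : ℝ) / (p - 1))) • f' (x k))
    (hx : ∀ k, x (k + 1) = x k + s k)
    (Δ : ℝ) (hΔ : Δ = f (x 0) - ⨅ y, f y)
    (k : ℕ) (hk : 1 ≤ k) :
    (Finset.range k).inf' (Finset.nonempty_range_iff.mpr (by omega))
        (fun i => ‖f' (x i)‖) ≤
      (1 / (k : ℝ)) * (∑ i ∈ Finset.range k, lam i) ^ ((1 : ℝ) / p) *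
        (2 * Δ + L * ∑ i ∈ Finset.range k, (L / lam i) ^ (2 / (p - 2))) ^ ((p - 1) / p) := by
  have hp1 : (1:ℝ) < p := by linarith
  have hp0 : (0:ℝ) < p := by linarith
  have hp2 : (0:ℝ) < p - 2 := by linarith
  have hp1' : (0:ℝ) < p - 1 := by linarith
  set u : ℕ → ℝ := fun i => lam i * ‖s i‖ ^ p with hu_def
  have hu_nonneg : ∀ i, 0 ≤ u i := fun i =>
    mul_nonneg (hlam i).le (Real.rpow_nonneg (norm_nonneg _) _)
  set C : ℕ → ℝ := fun i => (L / lam i) ^ (2/(p-2)) with hC_def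
  have hC_nonneg : ∀ i, 0 ≤ C i := fun i =>
    Real.rpow_nonneg (div_nonneg hL.le (hlam i).le) _
  have hfacts : ∀ i, f (x (i+1)) + (1/2) * u i ≤ f (x i) + L/2 * C i ∧
      ‖f' (x i)‖ = (lam i)^((1:ℝ)/p) * (u i)^((p-1)/p) := by
    intro i
    by_cases h0 : f' (x i) = 0
    · have hsi : s i = 0 := by rw [hs i, if_pos h0]
      have hxi : x (i+1) = x i := by rw [hx i, hsi, add_zero]
      have hui : u i = 0 := by
        simp [hu_def, hsi, Real.zero_rpow hp0.ne']
      constructor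
      · rw [hxi, hui]
        have h1 := hC_nonneg i
        nlinarith [hL.le]
      · rw [h0, hui, Real.zero_rpow (by positivity : (p-1)/p ≠ 0)]
        simp
    · set n : ℝ := ‖f' (x i)‖ with hn_def
      have hn : 0 < n := norm_pos_iff.mpr h0
      have hbase : 0 < lam i * n ^ (p-2) := mul_pos (hlam i) (Real.rpow_pos_of_pos hn _)
      set t : ℝ := (lam i * n ^ (p-2)) ^ (-(1:ℝ)/(p-1)) with ht_def
      have ht : 0 < t := Real.rpow_pos_of_pos hbase _
      have hsi : s i = -(t • f' (x i)) := by
        rw [hs i, if_neg h0, ← hn_def, ← ht_def, neg_smul]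
      have hns : ‖s i‖ = t * n := by
        rw [hsi, norm_neg, norm_smul, Real.norm_eq_abs, abs_of_pos ht, hn_def]
      have htp : t ^ (p-1) = (lam i * n^(p-2))⁻¹ := by
        rw [ht_def, ← Real.rpow_mul hbase.le,
          show (-(1:ℝ)/(p-1))*(p-1) = -1 by field_simp, Real.rpow_neg_one]
      have e1 : t ^ p = t ^ (p-1) * t := by
        have h := Real.rpow_add_one ht.ne' (p-1)
        rwa [sub_add_cancel] at h
      have e2 : n ^ p = n ^ (p-2) * n ^ (2:ℝ) := by
        rw [← Real.rpow_add hn]; norm_num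
      have hnp2 := (Real.rpow_pos_of_pos hn (p-2)).ne'
      have hui : u i = t * n ^ (2:ℝ) := by
        show lam i * ‖s i‖ ^ p = _
        rw [hns, Real.mul_rpow ht.le hn.le, e1, e2, htp]
        field_simp
        ring_nf
        simp [(hlam i).ne']
      have hksc := hor_key_scalar hL (hlam i) (mul_nonneg ht.le hn.le) hp
      have hdes := hor_descent f f' hf L hlip (x i) (s i)
      have hinner : ⟪f' (x i), s i⟫ = -(t * n ^ (2:ℝ)) := by
        rw [hsi, inner_neg_right, real_inner_smul_right, real_inner_self_eq_norm_sq,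
          Real.rpow_two, ← hn_def]
      have hsq : ‖s i‖^2 = (t*n)^(2:ℝ) := by rw [hns, Real.rpow_two]
      have hx1 : f (x (i+1)) = f (x i + s i) := by rw [hx i]
      have huq : lam i * (t*n)^p = t * n^(2:ℝ) := by rw [← hns]; exact hui
      constructor
      · rw [hx1, hui]
        have hCeq : C i = (L / lam i) ^ (2/(p-2)) := rfl
        rw [hCeq]
        rw [hinner, hsq] at hdes
        linarith [hksc, huq, hdes]
      · have hup : lam i * (u i)^(p-1) = n ^ p := by
          rw [hui, Real.mul_rpow ht.le (Real.rpow_nonneg hn.le _), htp,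
            ← Real.rpow_mul hn.le, show (2:ℝ)*(p-1) = (p-2) + p by ring, Real.rpow_add hn]
          field_simp
          ring_nf
          simp [(hlam i).ne']
        have hnn : (lam i * (u i)^(p-1)) ^ ((1:ℝ)/p) = n := by
          rw [hup, ← Real.rpow_mul hn.le, mul_one_div, div_self hp0.ne', Real.rpow_one]
        rw [hn_def] at hnn ⊢
        rw [← hnn, Real.mul_rpow (hlam i).le (Real.rpow_nonneg (hu_nonneg i) _),
          ← Real.rpow_mul (hu_nonneg i)]
        congr 1
        ring
  have step := fun i => (hfacts i).1
  have hgu := fun i => (hfacts i).2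
  have tele : ∑ i ∈ Finset.range k, (f (x i) - f (x (i+1))) = f (x 0) - f (x k) :=
    Finset.sum_range_sub' (fun i => f (x i)) k
  have hsum1 : ∑ i ∈ Finset.range k, ((1/2) * u i) ≤
      ∑ i ∈ Finset.range k, ((f (x i) - f (x (i+1))) + L/2 * C i) :=
    Finset.sum_le_sum (fun i _ => by linarith [step i])
  rw [Finset.sum_add_distrib, tele] at hsum1
  have hinf : ⨅ y, f y ≤ f (x k) := ciInf_le hbdd (x k)
  have hSsum : ∑ i ∈ Finset.range k, u i ≤ 2*Δ + L * ∑ i ∈ Finset.range k, C i := by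
    have h5 : ∑ i ∈ Finset.range k, ((1:ℝ)/2 * u i) = (1/2) * ∑ i ∈ Finset.range k, u i := by
      rw [Finset.mul_sum]
    have h6 : ∑ i ∈ Finset.range k, (L/2 * C i) = L/2 * ∑ i ∈ Finset.range k, C i := by
      rw [Finset.mul_sum]
    rw [h5, h6] at hsum1
    linarith
  have hq : Real.HolderConjugate p (p/(p-1)) :=
    (Real.holderConjugate_iff_eq_conjExponent hp1).mpr rfl
  have hhold : ∑ i ∈ Finset.range k, ‖f' (x i)‖ ≤
      (∑ i ∈ Finset.range k, lam i) ^ ((1:ℝ)/p) *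
        (∑ i ∈ Finset.range k, u i) ^ ((p-1)/p) := by
    have H := Real.inner_le_Lp_mul_Lq_of_nonneg (Finset.range k) hq
      (f := fun i => (lam i)^((1:ℝ)/p)) (g := fun i => (u i)^((p-1)/p))
      (fun i _ => Real.rpow_nonneg (hlam i).le _) (fun i _ => Real.rpow_nonneg (hu_nonneg i) _)
    have eF : ∀ i : ℕ, ((lam i)^((1:ℝ)/p))^p = lam i := fun i => by
      rw [← Real.rpow_mul (hlam i).le, one_div, inv_mul_cancel₀ hp0.ne', Real.rpow_one]
    have eG : ∀ i : ℕ, ((u i)^((p-1)/p))^(p/(p-1)) = u i := fun i => by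
      rw [← Real.rpow_mul (hu_nonneg i),
        show (p-1)/p*(p/(p-1)) = 1 by field_simp, Real.rpow_one]
    simp only [eF, eG] at H
    have e7 : (1:ℝ)/(p/(p-1)) = (p-1)/p := one_div_div _ _
    rw [e7] at H
    calc ∑ i ∈ Finset.range k, ‖f' (x i)‖
        = ∑ i ∈ Finset.range k, (lam i)^((1:ℝ)/p) * (u i)^((p-1)/p) :=
          Finset.sum_congr rfl (fun i _ => hgu i)
      _ ≤ _ := H
  have hlamsum : 0 ≤ (∑ i ∈ Finset.range k, lam i) ^ ((1:ℝ)/p) :=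
    Real.rpow_nonneg (Finset.sum_nonneg fun i _ => (hlam i).le) _
  have hfin : (∑ i ∈ Finset.range k, u i) ^ ((p-1)/p) ≤
      (2*Δ + L * ∑ i ∈ Finset.range k, C i) ^ ((p-1)/p) :=
    Real.rpow_le_rpow (Finset.sum_nonneg fun i _ => hu_nonneg i) hSsum (by positivity)
  set M := (Finset.range k).inf' (Finset.nonempty_range_iff.mpr (by omega))
      (fun i => ‖f' (x i)‖) with hM_def
  have hkM : (k:ℝ) * M ≤ ∑ i ∈ Finset.range k, ‖f' (x i)‖ := by
    calc (k:ℝ) * M = ∑ _i ∈ Finset.range k, M := by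
          rw [Finset.sum_const, Finset.card_range, nsmul_eq_mul]
      _ ≤ ∑ i ∈ Finset.range k, ‖f' (x i)‖ :=
          Finset.sum_le_sum (fun i hi => Finset.inf'_le _ hi)
  have hkpos : (0:ℝ) < (k:ℝ) := by exact_mod_cast Nat.pos_of_ne_zero (by omega)
  rw [show (1/(k:ℝ)) * (∑ i ∈ Finset.range k, lam i) ^ ((1:ℝ)/p) *
      (2 * Δ + L * ∑ i ∈ Finset.range k, (L / lam i) ^ (2 / (p - 2))) ^ ((p - 1) / p)
      = ((∑ i ∈ Finset.range k, lam i) ^ ((1:ℝ)/p) *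
      (2 * Δ + L * ∑ i ∈ Finset.range k, (L / lam i) ^ (2 / (p - 2))) ^ ((p - 1) / p)) / k
      by ring, le_div_iff₀ hkpos]
  calc M * k = (k:ℝ) * M := mul_comm _ _
    _ ≤ ∑ i ∈ Finset.range k, ‖f' (x i)‖ := hkM
    _ ≤ (∑ i ∈ Finset.range k, lam i) ^ ((1:ℝ)/p) *
        (∑ i ∈ Finset.range k, u i) ^ ((p-1)/p) := hhold
    _ ≤ _ := mul_le_mul_of_nonneg_left hfin hlamsum
end

section
/- For every index i, the Newton-type iterates satisfy f(x_{i+1}) − f(x_i) ≤ (M/6)‖s_i‖³ − (λ_i/4)‖s_i‖^p and ‖∇f(x_{i+1})‖ ≤ (M/2)‖s_i‖² + (3/2)λ_i‖s_i‖^{p−1}. -/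
open scoped RealInnerProductSpace

open Set


theorem grad_taylor_aux' {E : Type*} [NormedAddCommGroup E] [InnerProductSpace ℝ E]
    (f' : E → E) (H : E → E →L[ℝ] E)
    (hf' : ∀ y, HasFDerivAt f' (H y) y)
    (M : ℝ)
    (hlip : ∀ y z, ‖H y - H z‖ ≤ M * ‖y - z‖)
    (x u : E) : ‖f' (x + u) - f' x - H x u‖ ≤ M / 2 * ‖u‖ ^ 2 := by
  set g : ℝ → E := fun t => f' (x + t • u) - f' x - t • (H x u) with hg
  have hgd : ∀ t : ℝ, HasDerivAt g (H (x + t • u) u - H x u) t := by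
    intro t
    have hc : HasDerivAt (fun t : ℝ => x + t • u) u t := by
      simpa using ((hasDerivAt_id t).smul_const u).const_add x
    have h1 : HasDerivAt (fun t : ℝ => f' (x + t • u)) (H (x + t • u) u) t :=
      (hf' (x + t • u)).comp_hasDerivAt t hc
    exact ((h1.sub_const (f' x)).sub ((hasDerivAt_id t).smul_const (H x u))).congr_deriv (by simp)
  have hB : ∀ t : ℝ, HasDerivAt (fun t : ℝ => M / 2 * ‖u‖ ^ 2 * t ^ 2) (M * ‖u‖ ^ 2 * t) t := by
    intro t
    have := (hasDerivAt_pow 2 t).const_mul (M / 2 * ‖u‖ ^ 2)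
    exact this.congr_deriv (by push_cast; ring)
  have key : ∀ t ∈ Icc (0:ℝ) 1, ‖g t‖ ≤ M / 2 * ‖u‖ ^ 2 * t ^ 2 :=
    image_norm_le_of_norm_deriv_right_le_deriv_boundary
      (fun t _ => (hgd t).continuousAt.continuousWithinAt)
      (fun t _ => (hgd t).hasDerivWithinAt)
      (by simp [hg]) hB
      (by
        intro t ht
        have h1 : ‖H (x + t • u) u - H x u‖ ≤ ‖H (x + t • u) - H x‖ * ‖u‖ := by
          simpa using (H (x + t • u) - H x).le_opNorm u
        have h2 : ‖H (x + t • u) - H x‖ ≤ M * (t * ‖u‖) := by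
          have := hlip (x + t • u) x
          simpa [norm_smul, Real.norm_eq_abs, abs_of_nonneg ht.1] using this
        calc ‖H (x + t • u) u - H x u‖ ≤ ‖H (x + t • u) - H x‖ * ‖u‖ := h1
          _ ≤ M * (t * ‖u‖) * ‖u‖ := by
              exact mul_le_mul_of_nonneg_right h2 (norm_nonneg u)
          _ = M * ‖u‖ ^ 2 * t := by ring)
  have := key 1 (by norm_num)
  simpa [hg] using this


theorem fun_taylor_aux' {E : Type*} [NormedAddCommGroup E] [InnerProductSpace ℝ E]
    [CompleteSpace E] {M : ℝ}
    (f : E → ℝ) (f' : E → E) (H : E → E →L[ℝ] E)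
    (hf : ∀ y, HasGradientAt f (f' y) y)
    (grad_bound : ∀ u : E, ∀ x : E, ‖f' (x + u) - f' x - H x u‖ ≤ M / 2 * ‖u‖ ^ 2)
    (x u : E) :
    f (x + u) - f x - ⟪f' x, u⟫ - 1 / 2 * ⟪H x u, u⟫ ≤ M / 6 * ‖u‖ ^ 3 := by
  set φ : ℝ → ℝ := fun t => f (x + t • u) - f x - t * ⟪f' x, u⟫ - t ^ 2 / 2 * ⟪H x u, u⟫ with hφ
  have hφd : ∀ t : ℝ, HasDerivAt φ
      (⟪f' (x + t • u), u⟫ - ⟪f' x, u⟫ - t * ⟪H x u, u⟫) t := by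
    intro t
    have hc : HasDerivAt (fun t : ℝ => x + t • u) u t := by
      simpa using ((hasDerivAt_id t).smul_const u).const_add x
    have h1 : HasDerivAt (fun t : ℝ => f (x + t • u)) ⟪f' (x + t • u), u⟫ t := by
      have := ((hf (x + t • u)).hasFDerivAt).comp_hasDerivAt t hc
      simp at this
      exact this
    have h2 : HasDerivAt (fun t : ℝ => t * ⟪f' x, u⟫) ⟪f' x, u⟫ t := by
      simpa using (hasDerivAt_id t).mul_const (⟪f' x, u⟫ : ℝ)
    have h3 : HasDerivAt (fun t : ℝ => t ^ 2 / 2 * ⟪H x u, u⟫) (t * ⟪H x u, u⟫) t := by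
      have := ((hasDerivAt_pow 2 t).div_const 2).mul_const (⟪H x u, u⟫ : ℝ)
      exact this.congr_deriv (by push_cast; ring)
    exact ((h1.sub_const (f x)).sub h2).sub h3
  have hB : ∀ t : ℝ, HasDerivAt (fun t : ℝ => M / 6 * ‖u‖ ^ 3 * t ^ 3)
      (M / 2 * ‖u‖ ^ 3 * t ^ 2) t := by
    intro t
    have := (hasDerivAt_pow 3 t).const_mul (M / 6 * ‖u‖ ^ 3)
    exact this.congr_deriv (by push_cast; ring)
  have key : ∀ t ∈ Icc (0:ℝ) 1, φ t ≤ M / 6 * ‖u‖ ^ 3 * t ^ 3 := by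
    apply image_le_of_deriv_right_le_deriv_boundary
      (fun t _ => (hφd t).continuousAt.continuousWithinAt)
      (fun t _ => (hφd t).hasDerivWithinAt)
      (by simp [hφ])
      (fun t _ => (hB t).continuousAt.continuousWithinAt)
      (fun t _ => (hB t).hasDerivWithinAt)
    intro t ht
    have heq : ⟪f' (x + t • u), u⟫ - ⟪f' x, u⟫ - t * ⟪H x u, u⟫
        = ⟪f' (x + t • u) - f' x - t • (H x u), u⟫ := by
      rw [inner_sub_left, inner_sub_left, real_inner_smul_left]
    rw [heq]
    have hgb := grad_bound (t • u) x
    rw [map_smul] at hgb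
    have h1 : (⟪f' (x + t • u) - f' x - t • (H x u), u⟫ : ℝ)
        ≤ ‖f' (x + t • u) - f' x - t • (H x u)‖ * ‖u‖ := real_inner_le_norm _ _
    have h2 : ‖f' (x + t • u) - f' x - t • (H x u)‖ ≤ M / 2 * (t * ‖u‖) ^ 2 := by
      simpa [norm_smul, Real.norm_eq_abs, abs_of_nonneg ht.1] using hgb
    calc (⟪f' (x + t • u) - f' x - t • (H x u), u⟫ : ℝ)
        ≤ M / 2 * (t * ‖u‖) ^ 2 * ‖u‖ := h1.trans (mul_le_mul_of_nonneg_right h2 (norm_nonneg u))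
      _ = M / 2 * ‖u‖ ^ 3 * t ^ 2 := by ring
  have := key 1 (by norm_num)
  simp only [hφ, one_smul, one_pow, one_mul] at this
  linarith

/-- One-step bounds for the higher-order regularized Newton method:
`f(x_{i+1}) - f(x_i) ≤ (M/6)‖s_i‖³ - (λ_i/4)‖s_i‖^p` and
`‖∇f(x_{i+1})‖ ≤ (M/2)‖s_i‖² + (3/2)λ_i‖s_i‖^{p-1}`. -/
theorem hor_newton_step_bounds
    {E : Type*} [NormedAddCommGroup E] [InnerProductSpace ℝ E] [CompleteSpace E]
    (f : E → ℝ) (f' : E → E) (H : E → E →L[ℝ] E)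
    (hf : ∀ y, HasGradientAt f (f' y) y)
    (hf' : ∀ y, HasFDerivAt f' (H y) y)
    (M : ℝ) (hM : 0 < M)
    (hlip : ∀ y z, ‖H y - H z‖ ≤ M * ‖y - z‖)
    (p : ℝ) (hp : 3 < p)
    (lam : ℕ → ℝ) (hlam : ∀ k, 0 < lam k)
    (x s : ℕ → E)
    (hx : ∀ k, x (k + 1) = x k + s k)
    (hopt : ∀ k, ‖f' (x k) + H (x k) (s k) + (lam k * ‖s k‖ ^ (p - 2)) • s k‖ ≤
      lam k / 2 * ‖s k‖ ^ (p - 1))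
    (hdesc : ∀ k, ⟪f' (x k), s k⟫ ≤ 0)
    (i : ℕ) :
    f (x (i + 1)) - f (x i) ≤ M / 6 * ‖s i‖ ^ 3 - lam i / 4 * ‖s i‖ ^ p ∧
      ‖f' (x (i + 1))‖ ≤ M / 2 * ‖s i‖ ^ 2 + 3 / 2 * lam i * ‖s i‖ ^ (p - 1) := by
  have hgb : ∀ u x : E, ‖f' (x + u) - f' x - H x u‖ ≤ M / 2 * ‖u‖ ^ 2 :=
    fun u y => grad_taylor_aux' f' H hf' M hlip y u
  rcases eq_or_ne (s i) 0 with hs0 | hs0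
  · have hx1 : x (i + 1) = x i := by rw [hx i, hs0, add_zero]
    have hp0 : (0:ℝ) ^ p = 0 := Real.zero_rpow (by positivity)
    have hp1 : (0:ℝ) ^ (p - 1) = 0 := Real.zero_rpow (by intro h; nlinarith [h])
    have hg0 : ‖f' (x i)‖ ≤ 0 := by
      have := hopt i
      simp [hs0, hp1] at this
      simpa using this
    constructor
    · simp [hx1, hs0, hp0]
    · rw [hx1]
      simp only [hs0, norm_zero, hp1]
      nlinarith [hg0]
  · have hpos : 0 < ‖s i‖ := norm_pos_iff.mpr hs0
    set n := ‖s i‖ with hn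
    -- rpow identities
    have e1 : n ^ (p - 2) * n ^ (2:ℕ) = n ^ p := by
      rw [← Real.rpow_natCast n 2, ← Real.rpow_add hpos]
      norm_num
    have e2 : n ^ (p - 1) * n = n ^ p := by
      rw [← Real.rpow_add_one hpos.ne']
      congr 1; ring
    have e3 : n ^ (p - 2) * n = n ^ (p - 1) := by
      rw [← Real.rpow_add_one hpos.ne']
      congr 1; ring
    set r := f' (x i) + H (x i) (s i) + (lam i * n ^ (p - 2)) • s i with hr
    have hropt : ‖r‖ ≤ lam i / 2 * n ^ (p - 1) := hopt i
    constructor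
    · have taylor := fun_taylor_aux' f f' H hf hgb (x i) (s i)
      have hinner : (⟪r, s i⟫ : ℝ)
          = ⟪f' (x i), s i⟫ + ⟪H (x i) (s i), s i⟫ + lam i * n ^ (p - 2) * n ^ (2:ℕ) := by
        rw [hr, inner_add_left, inner_add_left, real_inner_smul_left,
          real_inner_self_eq_norm_sq]
      have hrs : (⟪r, s i⟫ : ℝ) ≤ lam i / 2 * n ^ (p - 1) * n :=
        (real_inner_le_norm r (s i)).trans (mul_le_mul_of_nonneg_right hropt (norm_nonneg _))
      have hds := hdesc i
      rw [hx i]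
      have hnp : lam i * n ^ (p - 2) * n ^ (2:ℕ) = lam i * n ^ p := by
        rw [mul_assoc, e1]
      have hnp2 : lam i / 2 * n ^ (p - 1) * n = lam i / 2 * n ^ p := by
        rw [mul_assoc, e2]
      rw [hnp] at hinner
      rw [hnp2] at hrs
      linarith
    · have hgrad := hgb (s i) (x i)
      have hdecomp : f' (x i + s i)
          = (f' (x i + s i) - f' (x i) - H (x i) (s i)) + r - (lam i * n ^ (p - 2)) • s i := by
        rw [hr]; abel
      have hsm : ‖(lam i * n ^ (p - 2)) • s i‖ = lam i * n ^ (p - 2) * n := by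
        rw [norm_smul, Real.norm_eq_abs, abs_of_nonneg]
        exact mul_nonneg (hlam i).le (Real.rpow_nonneg (norm_nonneg _) _)
      have hnorm : ‖f' (x i + s i)‖
          ≤ ‖f' (x i + s i) - f' (x i) - H (x i) (s i)‖ + ‖r‖
            + ‖(lam i * n ^ (p - 2)) • s i‖ := by
        rw (occs := .pos [1]) [hdecomp]
        exact (norm_sub_le _ _).trans (by gcongr; exact norm_add_le _ _)
      rw [hx i]
      have hsm2 : lam i * n ^ (p - 2) * n = lam i * n ^ (p - 1) := by
        rw [mul_assoc, e3]
      rw [hsm, hsm2] at hnorm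
      linarith
end

section
/- For every k ≥ 1, min_{1 ≤ i ≤ k} ‖∇f(x_i)‖ ≤ (2/k) · (∑_{i=0}^{k−1} λ_i)^{1/p} · (12Δ + 2M ∑_{i=0}^{k−1} (M/λ_i)^{3/(p−3)})^{1−1/p}, for any choice of positive parameters λ_0, …, λ_{k−1}. -/
open scoped RealInnerProductSpace
open Set

/-- Taylor bound for the gradient of a function with Lipschitz Hessian. -/
theorem hor_grad_taylor {E : Type*} [NormedAddCommGroup E] [InnerProductSpace ℝ E]
    (f' : E → E) (H : E → E →L[ℝ] E)
    (hf' : ∀ y, HasFDerivAt f' (H y) y) (M : ℝ)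
    (hlip : ∀ y z, ‖H y - H z‖ ≤ M * ‖y - z‖) (x s : E) :
    ‖f' (x + s) - f' x - H x s‖ ≤ M / 2 * ‖s‖ ^ 2 := by
  set φ : ℝ → E := fun τ => f' (x + τ • s) - f' x - τ • H x s with hφ
  have hline : ∀ τ : ℝ, HasDerivAt (fun τ : ℝ => x + τ • s) s τ := by
    intro τ
    simpa using ((hasDerivAt_id τ).smul_const s).const_add x
  have hder : ∀ τ : ℝ, HasDerivAt φ (H (x + τ • s) s - H x s) τ := by
    intro τ
    have h1 : HasDerivAt (fun τ : ℝ => f' (x + τ • s)) (H (x + τ • s) s) τ := by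
      exact (hf' (x + τ • s)).comp_hasDerivAt τ (hline τ)
    have h2 : HasDerivAt (fun τ : ℝ => τ • H x s) (H x s) τ := by
      simpa using (hasDerivAt_id τ).smul_const (H x s)
    exact (h1.sub_const (f' x)).sub h2
  have hcont : ContinuousOn φ (Icc (0:ℝ) 1) :=
    fun τ _ => ((hder τ).continuousAt).continuousWithinAt
  have hderW : ∀ τ ∈ Ico (0:ℝ) 1,
      HasDerivWithinAt φ (H (x + τ • s) s - H x s) (Ici τ) τ :=
    fun τ _ => (hder τ).hasDerivWithinAt
  have ha : ‖φ 0‖ ≤ M / 2 * ‖s‖ ^ 2 * (0:ℝ) ^ 2 := by simp [φ]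
  have hB : ∀ τ : ℝ, HasDerivAt (fun τ : ℝ => M / 2 * ‖s‖ ^ 2 * τ ^ 2)
      (M / 2 * ‖s‖ ^ 2 * (2 * τ)) τ := by
    intro τ
    simpa using ((hasDerivAt_pow 2 τ)).const_mul (M / 2 * ‖s‖ ^ 2)
  have bound : ∀ τ ∈ Ico (0:ℝ) 1,
      ‖H (x + τ • s) s - H x s‖ ≤ M / 2 * ‖s‖ ^ 2 * (2 * τ) := by
    intro τ hτ
    have h1 : ‖H (x + τ • s) s - H x s‖ ≤ ‖H (x + τ • s) - H x‖ * ‖s‖ := by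
      have := (H (x + τ • s) - H x).le_opNorm s
      simpa using this
    have h2 : ‖H (x + τ • s) - H x‖ ≤ M * (τ * ‖s‖) := by
      have := hlip (x + τ • s) x
      simpa [norm_smul, abs_of_nonneg hτ.1] using this
    have hs0 : (0:ℝ) ≤ ‖s‖ := norm_nonneg s
    calc ‖H (x + τ • s) s - H x s‖ ≤ (M * (τ * ‖s‖)) * ‖s‖ := by
          refine h1.trans (mul_le_mul_of_nonneg_right h2 hs0)
      _ = M / 2 * ‖s‖ ^ 2 * (2 * τ) := by ring
  have key := image_norm_le_of_norm_deriv_right_le_deriv_boundary hcont hderW ha hB bound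
  have := key (show (1:ℝ) ∈ Icc (0:ℝ) 1 by norm_num)
  simpa [φ] using this

/-- Cubic upper Taylor bound for a function with Lipschitz Hessian. -/
theorem hor_fun_taylor {E : Type*} [NormedAddCommGroup E] [InnerProductSpace ℝ E] [CompleteSpace E]
    (f : E → ℝ) (f' : E → E) (H : E → E →L[ℝ] E)
    (hf : ∀ y, HasGradientAt f (f' y) y)
    (hf' : ∀ y, HasFDerivAt f' (H y) y) (M : ℝ)
    (hlip : ∀ y z, ‖H y - H z‖ ≤ M * ‖y - z‖) (x s : E) :
    f (x + s) ≤ f x + ⟪f' x, s⟫ + 1 / 2 * ⟪H x s, s⟫ + M / 6 * ‖s‖ ^ 3 := by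
  set ψ : ℝ → ℝ := fun τ => f (x + τ • s) - f x - τ * ⟪f' x, s⟫ - τ ^ 2 / 2 * ⟪H x s, s⟫
    with hψ
  have hline : ∀ τ : ℝ, HasDerivAt (fun τ : ℝ => x + τ • s) s τ := by
    intro τ
    simpa using ((hasDerivAt_id τ).smul_const s).const_add x
  have hder : ∀ τ : ℝ,
      HasDerivAt ψ (⟪f' (x + τ • s), s⟫ - ⟪f' x, s⟫ - τ * ⟪H x s, s⟫) τ := by
    intro τ
    have h1 : HasDerivAt (fun τ : ℝ => f (x + τ • s)) ⟪f' (x + τ • s), s⟫ τ := by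
      have := ((hf (x + τ • s)).hasFDerivAt).comp_hasDerivAt τ (hline τ)
      simpa [Function.comp_def] using this
    have h2 : HasDerivAt (fun τ : ℝ => τ * ⟪f' x, s⟫) ⟪f' x, s⟫ τ := by
      simpa using (hasDerivAt_id τ).mul_const ⟪f' x, s⟫
    have h3 : HasDerivAt (fun τ : ℝ => τ ^ 2 / 2 * ⟪H x s, s⟫) (τ * ⟪H x s, s⟫) τ := by
      have := (hasDerivAt_pow 2 τ).div_const 2 |>.mul_const ⟪H x s, s⟫
      refine this.congr_deriv ?_
      ring
    exact ((h1.sub_const (f x)).sub h2).sub h3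
  have hbnd : ∀ τ : ℝ, 0 ≤ τ →
      |⟪f' (x + τ • s), s⟫ - ⟪f' x, s⟫ - τ * ⟪H x s, s⟫| ≤ M / 2 * ‖s‖ ^ 3 * τ ^ 2 := by
    intro τ hτ
    have hid : ⟪f' (x + τ • s), s⟫ - ⟪f' x, s⟫ - τ * ⟪H x s, s⟫
        = ⟪f' (x + τ • s) - f' x - H x (τ • s), s⟫ := by
      rw [inner_sub_left, inner_sub_left, map_smul]
      simp [real_inner_smul_left]
    rw [hid]
    have h1 : |⟪f' (x + τ • s) - f' x - H x (τ • s), s⟫| ≤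
        ‖f' (x + τ • s) - f' x - H x (τ • s)‖ * ‖s‖ := abs_real_inner_le_norm _ _
    have h2 := hor_grad_taylor f' H hf' M hlip x (τ • s)
    have h3 : ‖τ • s‖ ^ 2 = τ ^ 2 * ‖s‖ ^ 2 := by
      rw [norm_smul]
      simp [abs_of_nonneg hτ]
      ring
    calc |⟪f' (x + τ • s) - f' x - H x (τ • s), s⟫|
        ≤ (M / 2 * ‖τ • s‖ ^ 2) * ‖s‖ := by
          exact h1.trans (mul_le_mul_of_nonneg_right h2 (norm_nonneg s))
      _ = M / 2 * ‖s‖ ^ 3 * τ ^ 2 := by rw [h3]; ring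
  have hcont : ContinuousOn ψ (Icc (0:ℝ) 1) :=
    fun τ _ => ((hder τ).continuousAt).continuousWithinAt
  have hderW : ∀ τ ∈ Ico (0:ℝ) 1,
      HasDerivWithinAt ψ (⟪f' (x + τ • s), s⟫ - ⟪f' x, s⟫ - τ * ⟪H x s, s⟫) (Ici τ) τ :=
    fun τ _ => (hder τ).hasDerivWithinAt
  have ha : ‖ψ 0‖ ≤ M / 6 * ‖s‖ ^ 3 * (0:ℝ) ^ 3 := by simp [ψ]
  have hB : ∀ τ : ℝ, HasDerivAt (fun τ : ℝ => M / 6 * ‖s‖ ^ 3 * τ ^ 3)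
      (M / 2 * ‖s‖ ^ 3 * τ ^ 2) τ := by
    intro τ
    have := (hasDerivAt_pow 3 τ).const_mul (M / 6 * ‖s‖ ^ 3)
    refine this.congr_deriv ?_
    push_cast
    ring
  have bound : ∀ τ ∈ Ico (0:ℝ) 1,
      ‖⟪f' (x + τ • s), s⟫ - ⟪f' x, s⟫ - τ * ⟪H x s, s⟫‖ ≤ M / 2 * ‖s‖ ^ 3 * τ ^ 2 := by
    intro τ hτ
    simpa [Real.norm_eq_abs] using hbnd τ hτ.1
  have key := image_norm_le_of_norm_deriv_right_le_deriv_boundary hcont hderW ha hB bound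
  have h1 := key (show (1:ℝ) ∈ Icc (0:ℝ) 1 by norm_num)
  rw [Real.norm_eq_abs] at h1
  have h2 := (abs_le.mp (by simpa [ψ] using h1)).2
  linarith [h2]

/-- Per-step gradient bound. -/
theorem hor_step_grad {E : Type*} [NormedAddCommGroup E] [InnerProductSpace ℝ E]
    (f' : E → E) (H : E → E →L[ℝ] E)
    (hf' : ∀ y, HasFDerivAt f' (H y) y) (M : ℝ)
    (hlip : ∀ y z, ‖H y - H z‖ ≤ M * ‖y - z‖)
    (p : ℝ) (hp : 3 < p) (lam : ℝ) (hlam : 0 < lam) (x s : E)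
    (hopt : ‖f' x + H x s + (lam * ‖s‖ ^ (p - 2)) • s‖ ≤ lam / 2 * ‖s‖ ^ (p - 1)) :
    ‖f' (x + s)‖ ≤ M / 2 * ‖s‖ ^ (2:ℝ) + 3 * lam / 2 * ‖s‖ ^ (p - 1) := by
  have ht0 : (0:ℝ) ≤ ‖s‖ := norm_nonneg s
  have hw : ‖(lam * ‖s‖ ^ (p - 2)) • s‖ = lam * ‖s‖ ^ (p - 1) := by
    rcases eq_or_lt_of_le ht0 with h0 | h0
    · rw [show s = 0 from (norm_eq_zero.mp h0.symm)]
      simp [Real.zero_rpow (show p - 1 ≠ 0 from ne_of_gt (by linarith))]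
    · rw [norm_smul, Real.norm_eq_abs, abs_of_nonneg (by positivity), mul_assoc,
        ← Real.rpow_add_one (ne_of_gt h0)]
      ring_nf
  set u := f' (x + s) - f' x - H x s with hu
  set v := f' x + H x s + (lam * ‖s‖ ^ (p - 2)) • s with hv
  set w := (lam * ‖s‖ ^ (p - 2)) • s with hww
  have htri : ‖f' (x + s)‖ ≤ ‖u‖ + ‖v‖ + ‖w‖ := by
    have hdecomp : f' (x + s) = u + v - w := by rw [hu, hv, hww]; abel
    calc ‖f' (x + s)‖ = ‖u + v - w‖ := by rw [hdecomp]
      _ ≤ ‖u + v‖ + ‖w‖ := norm_sub_le _ _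
      _ ≤ ‖u‖ + ‖v‖ + ‖w‖ := add_le_add_left (norm_add_le u v) _
  have h2 := hor_grad_taylor f' H hf' M hlip x s
  have hsq : ‖s‖ ^ 2 = ‖s‖ ^ (2:ℝ) := (Real.rpow_two ‖s‖).symm
  rw [hsq] at h2
  calc ‖f' (x + s)‖ ≤ M / 2 * ‖s‖ ^ (2:ℝ) + lam / 2 * ‖s‖ ^ (p - 1)
        + lam * ‖s‖ ^ (p - 1) :=
        htri.trans (add_le_add (add_le_add h2 hopt) (le_of_eq hw))
    _ = M / 2 * ‖s‖ ^ (2:ℝ) + 3 * lam / 2 * ‖s‖ ^ (p - 1) := by ring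

/-- Per-step descent bound. -/
theorem hor_step_dec {E : Type*} [NormedAddCommGroup E] [InnerProductSpace ℝ E]
    [CompleteSpace E]
    (f : E → ℝ) (f' : E → E) (H : E → E →L[ℝ] E)
    (hf : ∀ y, HasGradientAt f (f' y) y)
    (hf' : ∀ y, HasFDerivAt f' (H y) y) (M : ℝ)
    (hlip : ∀ y z, ‖H y - H z‖ ≤ M * ‖y - z‖)
    (p : ℝ) (hp : 3 < p) (lam : ℝ) (hlam : 0 < lam) (x s : E)
    (hopt : ‖f' x + H x s + (lam * ‖s‖ ^ (p - 2)) • s‖ ≤ lam / 2 * ‖s‖ ^ (p - 1))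
    (hdesc : ⟪f' x, s⟫ ≤ 0) :
    f (x + s) ≤ f x - lam / 4 * ‖s‖ ^ p + M / 6 * ‖s‖ ^ (3:ℝ) := by
  have ht0 : (0:ℝ) ≤ ‖s‖ := norm_nonneg s
  have hin : ⟪f' x, s⟫ + ⟪H x s, s⟫ ≤ - (lam / 2) * ‖s‖ ^ p := by
    rcases eq_or_lt_of_le ht0 with h0 | h0
    · rw [show s = 0 from (norm_eq_zero.mp h0.symm)]
      simp [Real.zero_rpow (show p ≠ 0 from ne_of_gt (by linarith))]
    · have h1 : ⟪f' x + H x s + (lam * ‖s‖ ^ (p - 2)) • s, s⟫ ≤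
          (lam / 2 * ‖s‖ ^ (p - 1)) * ‖s‖ := by
        refine (real_inner_le_norm _ _).trans ?_
        exact mul_le_mul_of_nonneg_right hopt ht0
      rw [inner_add_left, inner_add_left, real_inner_smul_left,
        real_inner_self_eq_norm_mul_norm] at h1
      have e1 : lam / 2 * ‖s‖ ^ (p - 1) * ‖s‖ = lam / 2 * ‖s‖ ^ p := by
        rw [mul_assoc, ← Real.rpow_add_one (ne_of_gt h0)]; ring_nf
      have e2 : lam * ‖s‖ ^ (p - 2) * (‖s‖ * ‖s‖) = lam * ‖s‖ ^ p := by
        rw [mul_assoc, ← mul_assoc (‖s‖ ^ (p - 2)), ← Real.rpow_add_one (ne_of_gt h0),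
          ← Real.rpow_add_one (ne_of_gt h0)]
        ring_nf
      rw [e1, e2] at h1
      linarith
  have htay := hor_fun_taylor f f' H hf hf' M hlip x s
  have hc : ‖s‖ ^ 3 = ‖s‖ ^ (3:ℝ) := by
    rw [← Real.rpow_natCast ‖s‖ 3]; norm_num
  rw [hc] at htay
  linarith

/-- General gradient-norm bound for the higher-order regularized Newton method:
for all `k ≥ 1`, `min_{1 ≤ i ≤ k} ‖∇f(x_i)‖ ≤
(2/k) (∑_{i<k} λ_i)^{1/p} (12Δ + 2M ∑_{i<k} (M/λ_i)^{3/(p-3)})^{1-1/p}`. -/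
theorem hor_newton_rate_general
    {E : Type*} [NormedAddCommGroup E] [InnerProductSpace ℝ E] [CompleteSpace E]
    (f : E → ℝ) (f' : E → E) (H : E → E →L[ℝ] E)
    (hf : ∀ y, HasGradientAt f (f' y) y)
    (hf' : ∀ y, HasFDerivAt f' (H y) y)
    (M : ℝ) (hM : 0 < M)
    (hlip : ∀ y z, ‖H y - H z‖ ≤ M * ‖y - z‖)
    (hbdd : BddBelow (Set.range f))
    (p : ℝ) (hp : 3 < p)
    (lam : ℕ → ℝ) (hlam : ∀ k, 0 < lam k)
    (x s : ℕ → E)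
    (hx : ∀ k, x (k + 1) = x k + s k)
    (hopt : ∀ k, ‖f' (x k) + H (x k) (s k) + (lam k * ‖s k‖ ^ (p - 2)) • s k‖ ≤
      lam k / 2 * ‖s k‖ ^ (p - 1))
    (hdesc : ∀ k, (⟪f' (x k), s k⟫) ≤ 0)
    (Δ : ℝ) (hΔ : Δ = f (x 0) - ⨅ y, f y)
    (k : ℕ) (hk : 1 ≤ k) :
    (Finset.Icc 1 k).inf' (Finset.nonempty_Icc.mpr hk) (fun i => ‖f' (x i)‖) ≤
      2 / (k : ℝ) * (∑ i ∈ Finset.range k, lam i) ^ ((1 : ℝ) / p) *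
        (12 * Δ + 2 * M * ∑ i ∈ Finset.range k, (M / lam i) ^ (3 / (p - 3))) ^ (1 - 1 / p) := by
  have hp1 : (1:ℝ) < p := by linarith
  have hp0 : (0:ℝ) < p := by linarith
  have hp3 : (0:ℝ) < p - 3 := by linarith
  have hp1' : (0:ℝ) < p - 1 := by linarith
  set t : ℕ → ℝ := fun i => ‖s i‖ with htdef
  have ht0 : ∀ i, 0 ≤ t i := fun i => norm_nonneg _
  set Q : ℕ → ℝ := fun i => (M / lam i) ^ ((3:ℝ) / (p - 3)) with hQdef
  have hQpos : ∀ i, 0 < Q i := fun i => Real.rpow_pos_of_pos (div_pos hM (hlam i)) _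
  set SQ : ℝ := ∑ i ∈ Finset.range k, Q i with hSQdef
  have hSQ0 : 0 ≤ SQ := Finset.sum_nonneg fun i _ => (hQpos i).le
  set S : ℝ := ∑ i ∈ Finset.range k, lam i * t i ^ p with hSdef
  have hS0 : 0 ≤ S :=
    Finset.sum_nonneg fun i _ => mul_nonneg (hlam i).le (Real.rpow_nonneg (ht0 i) p)
  have hΔ0 : 0 ≤ Δ := by
    rw [hΔ]
    have := ciInf_le hbdd (x 0)
    linarith
  set A : ℝ := 12 * Δ + 2 * M * SQ with hAdef
  have hA0 : 0 ≤ A := by positivity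
  -- cube bound
  have hcube : ∀ i, M * t i ^ (3:ℝ) ≤ lam i * t i ^ p + M * Q i := by
    intro i
    have hltp : 0 ≤ lam i * t i ^ p := mul_nonneg (hlam i).le (Real.rpow_nonneg (ht0 i) p)
    rcases le_or_gt (t i ^ (3:ℝ)) (Q i) with h | h
    · have : M * t i ^ (3:ℝ) ≤ M * Q i := mul_le_mul_of_nonneg_left h hM.le
      linarith
    · have htpos : 0 < t i := by
        rcases eq_or_lt_of_le (ht0 i) with h0 | h0
        · exfalso
          rw [← h0, Real.zero_rpow (show (3:ℝ) ≠ 0 by norm_num)] at h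
          exact absurd h (not_lt.mpr (hQpos i).le)
        · exact h0
      have h1 : (Q i) ^ ((p-3)/3) < (t i ^ (3:ℝ)) ^ ((p-3)/3) :=
        Real.rpow_lt_rpow (hQpos i).le h (by positivity)
      rw [← Real.rpow_mul (le_of_lt (div_pos hM (hlam i))),
        ← Real.rpow_mul (ht0 i)] at h1
      rw [show (3:ℝ)/(p-3) * ((p-3)/3) = 1 by field_simp,
        show (3:ℝ) * ((p-3)/3) = p - 3 by field_simp, Real.rpow_one] at h1
      have h2 : M < lam i * t i ^ (p-3) := by
        rw [div_lt_iff₀ (hlam i)] at h1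
        linarith [h1]
      have h3 : M * t i ^ (3:ℝ) ≤ lam i * t i ^ (p-3) * t i ^ (3:ℝ) :=
        mul_le_mul_of_nonneg_right h2.le (Real.rpow_nonneg (ht0 i) _)
      have h4 : lam i * t i ^ (p-3) * t i ^ (3:ℝ) = lam i * t i ^ p := by
        rw [mul_assoc, ← Real.rpow_add htpos]
        norm_num
      nlinarith [mul_nonneg hM.le (hQpos i).le]
  -- summed descent
  have hS_le : S ≤ A := by
    have hdec12 : ∀ i, (lam i * t i ^ p) / 12 ≤
        (f (x i) - f (x (i + 1))) + (M * Q i) / 6 := by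
      intro i
      have hd := hor_step_dec f f' H hf hf' M hlip p hp (lam i) (hlam i)
        (x i) (s i) (hopt i) (hdesc i)
      rw [← hx i] at hd
      have hc := hcube i
      have e1 : lam i / 4 * ‖s i‖ ^ p = (lam i * t i ^ p) / 4 := by ring
      have e2 : M / 6 * ‖s i‖ ^ (3:ℝ) = (M * t i ^ (3:ℝ)) / 6 := by ring
      rw [e1, e2] at hd
      linarith
    have hsum := Finset.sum_le_sum (fun i (_ : i ∈ Finset.range k) => hdec12 i)
    rw [Finset.sum_add_distrib] at hsum
    have htel : ∑ i ∈ Finset.range k, (f (x i) - f (x (i + 1))) = f (x 0) - f (x k) :=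
      Finset.sum_range_sub' (fun i => f (x i)) k
    have hQs : ∑ i ∈ Finset.range k, (M * Q i) / 6 = (M * SQ) / 6 := by
      rw [hSQdef, Finset.mul_sum, Finset.sum_div]
    have hls : ∑ i ∈ Finset.range k, (lam i * t i ^ p) / 12 = S / 12 := by
      rw [hSdef, Finset.sum_div]
    rw [htel, hQs, hls] at hsum
    have hinf : ⨅ y, f y ≤ f (x k) := ciInf_le hbdd (x k)
    rw [hAdef]
    have : f (x 0) - f (x k) ≤ Δ := by rw [hΔ]; linarith
    linarith
  -- D and its properties
  set D : ℕ → ℝ := fun i => (M * t i ^ (2:ℝ)) ^ (p / (p - 1)) * lam i ^ (-(1 / (p - 1)))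
    with hDdef
  have hD0 : ∀ i, 0 ≤ D i := fun i =>
    mul_nonneg (Real.rpow_nonneg (by positivity) _) (Real.rpow_nonneg (hlam i).le _)
  have hDid : ∀ i, lam i ^ ((1:ℝ)/p) * D i ^ ((p - 1)/p) = M * t i ^ (2:ℝ) := by
    intro i
    have hMt : (0:ℝ) ≤ M * t i ^ (2:ℝ) := by positivity
    show lam i ^ ((1:ℝ)/p) *
      ((M * t i ^ (2:ℝ)) ^ (p / (p - 1)) * lam i ^ (-(1 / (p - 1)))) ^ ((p - 1)/p)
        = M * t i ^ (2:ℝ)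
    rw [Real.mul_rpow (Real.rpow_nonneg hMt _) (Real.rpow_nonneg (hlam i).le _),
      ← Real.rpow_mul hMt, ← Real.rpow_mul (hlam i).le,
      show p/(p-1)*((p-1)/p) = (1:ℝ) by field_simp,
      show (-(1/(p-1)))*((p-1)/p) = -(1/p) by field_simp, Real.rpow_one]
    rw [mul_comm (M * t i ^ (2:ℝ)) _, ← mul_assoc, ← Real.rpow_add (hlam i)]
    norm_num
  have hDle : ∀ i, D i ≤ 2 / (p - 1) * (lam i * t i ^ p) + (p - 3) / (p - 1) * (M * Q i) := by
    intro i
    have hMQ : 0 < M * Q i := mul_pos hM (hQpos i)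
    rcases eq_or_lt_of_le (ht0 i) with h0 | h0
    · have hD : D i = 0 := by
        show (M * t i ^ (2:ℝ)) ^ (p / (p - 1)) * lam i ^ (-(1 / (p - 1))) = 0
        rw [← h0, Real.zero_rpow (show (2:ℝ) ≠ 0 by norm_num), mul_zero,
          Real.zero_rpow (show p/(p-1) ≠ 0 from ne_of_gt (by positivity)), zero_mul]
      rw [hD, ← h0, Real.zero_rpow (ne_of_gt hp0), mul_zero]
      have : 0 ≤ (p - 3)/(p - 1) * (M * Q i) := by positivity
      linarith
    · have hltp : 0 < lam i * t i ^ p := mul_pos (hlam i) (Real.rpow_pos_of_pos h0 p)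
      have hid : D i = (lam i * t i ^ p) ^ (2/(p-1)) * (M * Q i) ^ ((p-3)/(p-1)) := by
        have hDpos : 0 < D i := by
          show 0 < (M * t i ^ (2:ℝ)) ^ (p / (p - 1)) * lam i ^ (-(1 / (p - 1)))
          have h1 : 0 < M * t i ^ (2:ℝ) := mul_pos hM (Real.rpow_pos_of_pos h0 _)
          exact mul_pos (Real.rpow_pos_of_pos h1 _) (Real.rpow_pos_of_pos (hlam i) _)
        have hRpos : 0 < (lam i * t i ^ p) ^ (2/(p-1)) * (M * Q i) ^ ((p-3)/(p-1)) :=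
          mul_pos (Real.rpow_pos_of_pos hltp _) (Real.rpow_pos_of_pos hMQ _)
        have l1 : Real.log (D i)
            = p/(p-1) * (Real.log M + 2 * Real.log (t i)) - 1/(p-1) * Real.log (lam i) := by
          show Real.log ((M * t i ^ (2:ℝ)) ^ (p / (p - 1)) * lam i ^ (-(1 / (p - 1)))) = _
          have h1 : 0 < M * t i ^ (2:ℝ) := mul_pos hM (Real.rpow_pos_of_pos h0 _)
          rw [Real.log_mul (ne_of_gt (Real.rpow_pos_of_pos h1 _))
              (ne_of_gt (Real.rpow_pos_of_pos (hlam i) _)),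
            Real.log_rpow h1, Real.log_rpow (hlam i),
            Real.log_mul (ne_of_gt hM) (ne_of_gt (Real.rpow_pos_of_pos h0 _)),
            Real.log_rpow h0]
          ring
        have l2 : Real.log ((lam i * t i ^ p) ^ (2/(p-1)) * (M * Q i) ^ ((p-3)/(p-1)))
            = 2/(p-1) * (Real.log (lam i) + p * Real.log (t i))
              + (p-3)/(p-1) * (Real.log M + 3/(p-3) * (Real.log M - Real.log (lam i))) := by
          have hQQ : Real.log (Q i) = 3/(p-3) * (Real.log M - Real.log (lam i)) := by
            show Real.log ((M / lam i) ^ ((3:ℝ)/(p-3))) = _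
            rw [Real.log_rpow (div_pos hM (hlam i)), Real.log_div (ne_of_gt hM)
              (ne_of_gt (hlam i))]
          rw [Real.log_mul (ne_of_gt (Real.rpow_pos_of_pos hltp _))
              (ne_of_gt (Real.rpow_pos_of_pos hMQ _)),
            Real.log_rpow hltp, Real.log_rpow hMQ,
            Real.log_mul (ne_of_gt (hlam i)) (ne_of_gt (Real.rpow_pos_of_pos h0 _)),
            Real.log_rpow h0,
            Real.log_mul (ne_of_gt hM) (ne_of_gt (hQpos i)), hQQ]
        have l3 : Real.log (D i)
            = Real.log ((lam i * t i ^ p) ^ (2/(p-1)) * (M * Q i) ^ ((p-3)/(p-1))) := by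
          rw [l1, l2]
          field_simp
          ring
        have := congrArg Real.exp l3
        rwa [Real.exp_log hDpos, Real.exp_log hRpos] at this
      rw [hid]
      exact Real.geom_mean_le_arith_mean2_weighted (by positivity) (by positivity)
        hltp.le hMQ.le (by field_simp; ring)
  have hSD_le : (∑ i ∈ Finset.range k, D i) ≤ A := by
    have h1 : (∑ i ∈ Finset.range k, D i) ≤
        ∑ i ∈ Finset.range k,
          (2 / (p - 1) * (lam i * t i ^ p) + (p - 3) / (p - 1) * (M * Q i)) :=
      Finset.sum_le_sum fun i _ => hDle i
    rw [Finset.sum_add_distrib, ← Finset.mul_sum, ← Finset.mul_sum] at h1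
    have h2 : ∑ i ∈ Finset.range k, M * Q i = M * SQ := by
      rw [hSQdef, Finset.mul_sum]
    rw [h2, ← hSdef] at h1
    refine h1.trans ?_
    rw [hAdef]
    have hMSQ : 0 ≤ M * SQ := mul_nonneg hM.le hSQ0
    rw [div_mul_eq_mul_div, div_mul_eq_mul_div, ← add_div, div_le_iff₀ hp1']
    nlinarith
  -- lam * t^{p-1} identity
  have hLid : ∀ i, lam i * t i ^ (p - 1) = lam i ^ ((1:ℝ)/p) * (lam i * t i ^ p) ^ ((p - 1)/p) := by
    intro i
    rw [Real.mul_rpow (hlam i).le (Real.rpow_nonneg (ht0 i) p),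
      ← Real.rpow_mul (ht0 i),
      show p * ((p-1)/p) = p - 1 by field_simp,
      ← mul_assoc, ← Real.rpow_add (hlam i),
      show (1:ℝ)/p + (p-1)/p = 1 by field_simp; ring, Real.rpow_one]
  -- Hölder
  have hHold : ∀ X : ℕ → ℝ, (∀ i, 0 ≤ X i) →
      ∑ i ∈ Finset.range k, lam i ^ ((1:ℝ)/p) * X i ^ ((p - 1)/p) ≤
        (∑ i ∈ Finset.range k, lam i) ^ ((1:ℝ)/p) *
          (∑ i ∈ Finset.range k, X i) ^ ((p - 1)/p) := by
    intro X hX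
    have hpq : Real.HolderConjugate p (p/(p-1)) :=
      (Real.holderConjugate_iff_eq_conjExponent hp1).2 rfl
    have hH := Real.inner_le_Lp_mul_Lq (Finset.range k)
      (fun i => lam i ^ ((1:ℝ)/p)) (fun i => X i ^ ((p-1)/p)) hpq
    have e1 : ∀ i, |lam i ^ ((1:ℝ)/p)| ^ p = lam i := by
      intro i
      rw [abs_of_nonneg (Real.rpow_nonneg (hlam i).le _), ← Real.rpow_mul (hlam i).le,
        show (1:ℝ)/p * p = 1 by field_simp, Real.rpow_one]
    have e2 : ∀ i, |X i ^ ((p-1)/p)| ^ (p/(p-1)) = X i := by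
      intro i
      rw [abs_of_nonneg (Real.rpow_nonneg (hX i) _), ← Real.rpow_mul (hX i),
        show (p-1)/p * (p/(p-1)) = 1 by field_simp, Real.rpow_one]
    rw [Finset.sum_congr rfl (fun i _ => e1 i), Finset.sum_congr rfl (fun i _ => e2 i),
      show (1:ℝ)/(p/(p-1)) = (p-1)/p by rw [one_div_div]] at hH
    exact hH
  -- min of gradients
  set G : ℝ := (Finset.Icc 1 k).inf' (Finset.nonempty_Icc.mpr hk) (fun i => ‖f' (x i)‖)
    with hGdef
  have hGle : ∀ i ∈ Finset.range k, G ≤ M / 2 * t i ^ (2:ℝ) + 3 * lam i / 2 * t i ^ (p - 1) := by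
    intro i hi
    rw [Finset.mem_range] at hi
    have h1 : G ≤ ‖f' (x (i + 1))‖ :=
      Finset.inf'_le _ (Finset.mem_Icc.mpr ⟨Nat.le_add_left 1 i, hi⟩)
    refine h1.trans ?_
    rw [hx i]
    exact hor_step_grad f' H hf' M hlip p hp (lam i) (hlam i) (x i) (s i) (hopt i)
  -- main chain
  have hkpos : (0:ℝ) < (k:ℝ) := by exact_mod_cast Nat.pos_of_ne_zero (by omega)
  have hmain : (k:ℝ) * G ≤ 2 * (∑ i ∈ Finset.range k, lam i) ^ ((1:ℝ)/p) * A ^ ((p - 1)/p) := by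
    have h1 : (k:ℝ) * G ≤ ∑ i ∈ Finset.range k,
        (M / 2 * t i ^ (2:ℝ) + 3 * lam i / 2 * t i ^ (p - 1)) := by
      calc (k:ℝ) * G = ∑ _i ∈ Finset.range k, G := by
            rw [Finset.sum_const, Finset.card_range, nsmul_eq_mul]
        _ ≤ _ := Finset.sum_le_sum hGle
    have h2 : ∀ i, M / 2 * t i ^ (2:ℝ) + 3 * lam i / 2 * t i ^ (p - 1) =
        1/2 * (lam i ^ ((1:ℝ)/p) * D i ^ ((p - 1)/p))
          + 3/2 * (lam i ^ ((1:ℝ)/p) * (lam i * t i ^ p) ^ ((p - 1)/p)) := by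
      intro i
      rw [hDid i, ← hLid i]
      ring
    have h3 : (k:ℝ) * G ≤
        1/2 * ∑ i ∈ Finset.range k, lam i ^ ((1:ℝ)/p) * D i ^ ((p - 1)/p)
          + 3/2 * ∑ i ∈ Finset.range k, lam i ^ ((1:ℝ)/p) * (lam i * t i ^ p) ^ ((p - 1)/p) := by
      refine h1.trans (le_of_eq ?_)
      rw [Finset.mul_sum, Finset.mul_sum, ← Finset.sum_add_distrib]
      exact Finset.sum_congr rfl fun i _ => h2 i
    have h4 := hHold D hD0
    have h5 := hHold (fun i => lam i * t i ^ p)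
      (fun i => mul_nonneg (hlam i).le (Real.rpow_nonneg (ht0 i) p))
    have hrm : ∀ B : ℝ, 0 ≤ B → B ≤ A → B ^ ((p - 1)/p) ≤ A ^ ((p - 1)/p) :=
      fun B hB hBA => Real.rpow_le_rpow hB hBA (by positivity)
    have hL0 : 0 ≤ (∑ i ∈ Finset.range k, lam i) ^ ((1:ℝ)/p) :=
      Real.rpow_nonneg (Finset.sum_nonneg fun i _ => (hlam i).le) _
    calc (k:ℝ) * G ≤ _ := h3
      _ ≤ 1/2 * ((∑ i ∈ Finset.range k, lam i) ^ ((1:ℝ)/p) *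
            (∑ i ∈ Finset.range k, D i) ^ ((p - 1)/p))
          + 3/2 * ((∑ i ∈ Finset.range k, lam i) ^ ((1:ℝ)/p) * S ^ ((p - 1)/p)) := by
          rw [hSdef]
          gcongr
      _ ≤ 1/2 * ((∑ i ∈ Finset.range k, lam i) ^ ((1:ℝ)/p) * A ^ ((p - 1)/p))
          + 3/2 * ((∑ i ∈ Finset.range k, lam i) ^ ((1:ℝ)/p) * A ^ ((p - 1)/p)) := by
          have hb1 := hrm _ (Finset.sum_nonneg fun i _ => hD0 i) hSD_le
          have hb2 := hrm _ hS0 hS_le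
          gcongr
      _ = 2 * (∑ i ∈ Finset.range k, lam i) ^ ((1:ℝ)/p) * A ^ ((p - 1)/p) := by ring
  have hexp : 1 - 1/p = (p - 1)/p := by field_simp
  rw [hexp]
  have hgoal : G ≤ 2 / (k:ℝ) * (∑ i ∈ Finset.range k, lam i) ^ ((1:ℝ)/p) * A ^ ((p - 1)/p) := by
    have h6 : 2 / (k:ℝ) * (∑ i ∈ Finset.range k, lam i) ^ ((1:ℝ)/p) * A ^ ((p - 1)/p)
        = (2 * (∑ i ∈ Finset.range k, lam i) ^ ((1:ℝ)/p) * A ^ ((p - 1)/p)) / k := by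
      ring
    rw [h6, le_div_iff₀ hkpos]
    calc G * (k:ℝ) = (k:ℝ) * G := mul_comm _ _
      _ ≤ _ := hmain
  exact hgoal
end

section
/- For every index i, the Gauss–Newton step satisfies ‖F_i + J_i s_i‖² − ‖F_i‖² ≤ −2 μ_i ‖F_i‖ ‖s_i‖^p, and consequently ‖F_i + J_i s_i‖ ≤ ‖F_i‖ − μ_i ‖s_i‖^p. -/
open scoped RealInnerProductSpace

/-- Decrease of the Gauss–Newton model: under the inexact optimality condition,
`‖F_i + J_i s_i‖² - ‖F_i‖² ≤ -2 μ_i ‖F_i‖ ‖s_i‖^p` and consequently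
`‖F_i + J_i s_i‖ ≤ ‖F_i‖ - μ_i ‖s_i‖^p`. -/
theorem gn_model_decrease
    {E V : Type*} [NormedAddCommGroup E] [InnerProductSpace ℝ E] [CompleteSpace E]
    [NormedAddCommGroup V] [InnerProductSpace ℝ V] [CompleteSpace V]
    (F : E → V) (J : E → E →L[ℝ] V)
    (hF : ∀ y, HasFDerivAt F (J y) y)
    (p : ℝ) (hp : 2 < p)
    (mu : ℕ → ℝ) (hmu : ∀ k, 0 < mu k)
    (x s : ℕ → E)
    (hFpos : ∀ k, 0 < ‖F (x k)‖)
    (lam : ℕ → ℝ) (hlamdef : ∀ k, lam k = 2 * mu k * ‖F (x k)‖)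
    (hopt : ∀ k,
      ‖ContinuousLinearMap.adjoint (J (x k)) (F (x k) + J (x k) (s k)) +
          (lam k * ‖s k‖ ^ (p - 2)) • s k‖ ≤ lam k / 2 * ‖s k‖ ^ (p - 1))
    (i : ℕ) :
    ‖F (x i) + J (x i) (s i)‖ ^ 2 - ‖F (x i)‖ ^ 2 ≤
        -2 * mu i * ‖F (x i)‖ * ‖s i‖ ^ p ∧
      ‖F (x i) + J (x i) (s i)‖ ≤ ‖F (x i)‖ - mu i * ‖s i‖ ^ p := by
  have hmui := hmu i
  have hFi := hFpos i
  have hopti := hopt i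
  have hlami : lam i = 2 * mu i * ‖F (x i)‖ := hlamdef i
  have hlampos : 0 < lam i := by rw [hlami]; positivity
  have key : ‖F (x i) + J (x i) (s i)‖ ^ 2 - ‖F (x i)‖ ^ 2 ≤
      -2 * mu i * ‖F (x i)‖ * ‖s i‖ ^ p := by
    by_cases hu : s i = 0
    · simp [hu, Real.zero_rpow (by linarith : p ≠ (0:ℝ))]
    · have htpos : 0 < ‖s i‖ := norm_pos_iff.mpr hu
      set A := F (x i)
      set L := J (x i)
      set u := s i
      set t := ‖u‖ with ht
      set g := ContinuousLinearMap.adjoint L (A + L u) + (lam i * t ^ (p - 2)) • u with hg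
      have h1 : ⟪A + L u, L u⟫ = ⟪g, u⟫ - lam i * t ^ (p - 2) * t ^ 2 := by
        simp [hg, inner_add_left, real_inner_smul_left,
          ContinuousLinearMap.adjoint_inner_left, real_inner_self_eq_norm_sq]
        rw [← ht]; ring
      have h2 : ⟪g, u⟫ ≤ lam i / 2 * t ^ (p - 1) * t :=
        le_trans (real_inner_le_norm g u)
          (mul_le_mul_of_nonneg_right hopti (norm_nonneg u))
      have e1 : t ^ (p - 2) * t ^ 2 = t ^ p := by
        rw [show (t:ℝ) ^ (2:ℕ) = t ^ ((2:ℕ):ℝ) from (Real.rpow_natCast t 2).symm,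
          ← Real.rpow_add htpos]
        norm_num
      have e2 : t ^ (p - 1) * t = t ^ p := by
        nth_rewrite 2 [show t = t ^ (1:ℝ) from (Real.rpow_one t).symm]
        rw [← Real.rpow_add htpos]
        norm_num
      have expand : ‖A + L u‖ ^ 2 = ‖A‖ ^ 2 + 2 * ⟪A, L u⟫ + ‖L u‖ ^ 2 :=
        norm_add_sq_real A (L u)
      have h3 : ⟪A, L u⟫ = ⟪A + L u, L u⟫ - ‖L u‖ ^ 2 := by
        rw [inner_add_left, real_inner_self_eq_norm_sq]; ring
      have hLu : 0 ≤ ‖L u‖ ^ 2 := sq_nonneg _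
      have h1' : ⟪A + L u, L u⟫ = ⟪g, u⟫ - lam i * t ^ p := by
        rw [h1, mul_assoc, e1]
      have h2' : ⟪g, u⟫ ≤ lam i / 2 * t ^ p := by
        calc ⟪g, u⟫ ≤ lam i / 2 * t ^ (p - 1) * t := h2
          _ = lam i / 2 * t ^ p := by rw [mul_assoc, e2]
      have hlamT : lam i * t ^ p = 2 * mu i * ‖A‖ * t ^ p := by rw [hlami]
      linarith [h1', h2', expand, h3, hLu, hlamT]
  refine ⟨key, ?_⟩
  have hm : 0 ≤ mu i * ‖s i‖ ^ p := by positivity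
  have hA' : 0 ≤ ‖F (x i) + J (x i) (s i)‖ := norm_nonneg _
  have hb2m : 2 * (mu i * ‖s i‖ ^ p) ≤ ‖F (x i)‖ := by
    nlinarith [key, sq_nonneg ‖F (x i) + J (x i) (s i)‖]
  have h4 : ‖F (x i) + J (x i) (s i)‖ ^ 2 ≤ (‖F (x i)‖ - mu i * ‖s i‖ ^ p) ^ 2 := by
    nlinarith [key, sq_nonneg (mu i * ‖s i‖ ^ p)]
  exact le_of_pow_le_pow_left₀ two_ne_zero (by linarith) h4
end

section
/- For every index i, the Gauss–Newton iterates satisfy ‖F_{i+1}‖ − ‖F_i‖ ≤ (L/2)‖s_i‖² − μ_i‖s_i‖^p and ‖∇f(x_{i+1})‖ ≤ ‖F_i‖ (L‖s_i‖ + 3μ_i‖s_i‖^{p−1}) + (Lσ/2)‖s_i‖², where f(x) = ½‖F(x)‖² so that ∇f(x) = J(x)^⊤ F(x). -/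
lemma gn_taylor_aux
    {E V : Type*} [NormedAddCommGroup E] [NormedSpace ℝ E]
    [NormedAddCommGroup V] [NormedSpace ℝ V] [CompleteSpace V]
    (F : E → V) (J : E → E →L[ℝ] V)
    (hF : ∀ y, HasFDerivAt F (J y) y)
    (L : ℝ) (hL : 0 ≤ L)
    (hlip : ∀ y z, ‖J y - J z‖ ≤ L * ‖y - z‖)
    (x u : E) :
    ‖F (x + u) - F x - J x u‖ ≤ L / 2 * ‖u‖ ^ 2 := by
  have hJcont : Continuous J := by
    have : LipschitzWith ⟨L, hL⟩ J := by
      apply LipschitzWith.of_dist_le_mul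
      intro y z
      rw [dist_eq_norm, dist_eq_norm]; exact hlip y z
    exact this.continuous
  set g : ℝ → V := fun t => F (x + t • u) - t • (J x u) with hg
  have hderiv : ∀ t : ℝ, HasDerivAt g ((J (x + t • u)) u - J x u) t := by
    intro t
    have h1 : HasDerivAt (fun t : ℝ => x + t • u) u t := by
      simpa using ((hasDerivAt_id t).smul_const u).const_add x
    have h2 : HasDerivAt (fun t : ℝ => F (x + t • u)) ((J (x + t • u)) u) t := by
      exact (hF (x + t • u)).comp_hasDerivAt t h1
    have h3 := h2.sub ((hasDerivAt_id t).smul_const (J x u))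
    rw [one_smul] at h3
    exact h3
  have hcont : Continuous fun t : ℝ => (J (x + t • u)) u - J x u := by
    have : Continuous fun t : ℝ => J (x + t • u) :=
      hJcont.comp (by continuity)
    exact ((ContinuousLinearMap.apply ℝ V u).continuous.comp this).sub continuous_const
  have hint : IntervalIntegrable (fun t : ℝ => (J (x + t • u)) u - J x u)
      MeasureTheory.volume 0 1 := hcont.intervalIntegrable 0 1
  have hFTC : g 1 - g 0 = ∫ t in (0:ℝ)..1, ((J (x + t • u)) u - J x u) := by
    rw [intervalIntegral.integral_eq_sub_of_hasDerivAt (fun t _ => hderiv t) hint]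
  have hval : g 1 - g 0 = F (x + u) - F x - J x u := by
    simp [hg]
    abel
  have hbound : ‖∫ t in (0:ℝ)..1, ((J (x + t • u)) u - J x u)‖ ≤
      |∫ t in (0:ℝ)..1, L * t * ‖u‖ ^ 2| := by
    apply intervalIntegral.norm_integral_le_abs_of_norm_le
    · rw [Set.uIoc_of_le zero_le_one]
      filter_upwards [MeasureTheory.ae_restrict_mem measurableSet_Ioc] with t ht
      have h1 : ‖(J (x + t • u) - J x) u‖ ≤ ‖J (x + t • u) - J x‖ * ‖u‖ :=
        (J (x + t • u) - J x).le_opNorm u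
      have ht0 : (0:ℝ) < t := by simpa using ht.1
      have h2 : ‖J (x + t • u) - J x‖ ≤ L * (t * ‖u‖) := by
        have := hlip (x + t • u) x
        simpa [norm_smul, abs_of_nonneg ht0.le] using this
      calc ‖(J (x + t • u)) u - J x u‖ = ‖(J (x + t • u) - J x) u‖ := by
            simp [ContinuousLinearMap.sub_apply]
        _ ≤ ‖J (x + t • u) - J x‖ * ‖u‖ := h1
        _ ≤ L * (t * ‖u‖) * ‖u‖ := by
            apply mul_le_mul_of_nonneg_right h2 (norm_nonneg u)
        _ = L * t * ‖u‖ ^ 2 := by ring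
    · apply Continuous.intervalIntegrable
      continuity
  have hintval : (∫ t in (0:ℝ)..1, L * t * ‖u‖ ^ 2) = L / 2 * ‖u‖ ^ 2 := by
    have : (fun t : ℝ => L * t * ‖u‖ ^ 2) = fun t : ℝ => (L * ‖u‖ ^ 2) * t := by
      funext t; ring
    rw [this, intervalIntegral.integral_const_mul, integral_id]
    ring
  calc ‖F (x + u) - F x - J x u‖ = ‖g 1 - g 0‖ := by rw [hval]
    _ = ‖∫ t in (0:ℝ)..1, ((J (x + t • u)) u - J x u)‖ := by rw [hFTC]
    _ ≤ |∫ t in (0:ℝ)..1, L * t * ‖u‖ ^ 2| := hbound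
    _ = L / 2 * ‖u‖ ^ 2 := by rw [hintval]; exact abs_of_nonneg (by positivity)

set_option maxHeartbeats 1000000 in
lemma gn_key
    {E V : Type*} [NormedAddCommGroup E] [InnerProductSpace ℝ E] [CompleteSpace E]
    [NormedAddCommGroup V] [InnerProductSpace ℝ V] [CompleteSpace V]
    (F : E → V) (J : E → E →L[ℝ] V)
    (hF : ∀ y, HasFDerivAt F (J y) y)
    (L σ : ℝ) (hL : 0 < L) (hσ : 0 < σ)
    (hlip : ∀ y z, ‖J y - J z‖ ≤ L * ‖y - z‖)
    (hJbdd : ∀ y, ‖J y‖ ≤ σ)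
    (p : ℝ) (hp : 2 < p)
    (μ : ℝ) (hμ : 0 < μ)
    (y u : E) (hFy : 0 < ‖F y‖)
    (hopt : ‖ContinuousLinearMap.adjoint (J y) (F y + J y u) +
        ((2 * μ * ‖F y‖) * ‖u‖ ^ (p - 2)) • u‖ ≤ (2 * μ * ‖F y‖) / 2 * ‖u‖ ^ (p - 1)) :
    ‖F (y + u)‖ - ‖F y‖ ≤ L / 2 * ‖u‖ ^ 2 - μ * ‖u‖ ^ p ∧
      ‖ContinuousLinearMap.adjoint (J (y + u)) (F (y + u))‖ ≤
        ‖F y‖ * (L * ‖u‖ + 3 * μ * ‖u‖ ^ (p - 1)) + L * σ / 2 * ‖u‖ ^ 2 := by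
  set lam : ℝ := 2 * μ * ‖F y‖ with hlam
  have hlam0 : 0 < lam := by positivity
  have hu0 : (0:ℝ) ≤ ‖u‖ := norm_nonneg u
  -- rpow arithmetic
  have hpow1 : ‖u‖ ^ (p - 1) * ‖u‖ = ‖u‖ ^ p := by
    calc ‖u‖ ^ (p - 1) * ‖u‖ = ‖u‖ ^ (p - 1) * ‖u‖ ^ (1:ℝ) := by rw [Real.rpow_one]
      _ = ‖u‖ ^ ((p - 1) + 1) := (Real.rpow_add' hu0 (by linarith)).symm
      _ = ‖u‖ ^ p := by ring_nf
  have hpow2 : ‖u‖ ^ (p - 2) * ‖u‖ ^ (2:ℕ) = ‖u‖ ^ p := by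
    calc ‖u‖ ^ (p - 2) * ‖u‖ ^ (2:ℕ) = ‖u‖ ^ (p - 2) * ‖u‖ ^ ((2:ℕ):ℝ) := by
          rw [Real.rpow_natCast]
      _ = ‖u‖ ^ ((p - 2) + 2) := (Real.rpow_add' hu0 (by push_cast; linarith)).symm
      _ = ‖u‖ ^ p := by norm_num
  have hpow3 : ‖u‖ ^ (p - 2) * ‖u‖ = ‖u‖ ^ (p - 1) := by
    calc ‖u‖ ^ (p - 2) * ‖u‖ = ‖u‖ ^ (p - 2) * ‖u‖ ^ (1:ℝ) := by rw [Real.rpow_one]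
      _ = ‖u‖ ^ ((p - 2) + 1) := (Real.rpow_add' hu0 (by linarith)).symm
      _ = ‖u‖ ^ (p - 1) := by ring_nf
  have hup : (0:ℝ) ≤ ‖u‖ ^ p := Real.rpow_nonneg hu0 p
  have hup1 : (0:ℝ) ≤ ‖u‖ ^ (p-1) := Real.rpow_nonneg hu0 _
  have hup2 : (0:ℝ) ≤ ‖u‖ ^ (p-2) := Real.rpow_nonneg hu0 _
  set m : V := F y + J y u with hm
  set e : E := ContinuousLinearMap.adjoint (J y) m + (lam * ‖u‖ ^ (p - 2)) • u with he
  have he_bound : ‖e‖ ≤ lam / 2 * ‖u‖ ^ (p - 1) := hopt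
  have hadj : ContinuousLinearMap.adjoint (J y) m = e - (lam * ‖u‖ ^ (p - 2)) • u := by
    rw [he]; abel
  -- inner product bound: ⟪m, J y u⟫ ≤ -(lam/2) ‖u‖^p
  have hinner : inner ℝ m (J y u) ≤ -(lam / 2) * ‖u‖ ^ p := by
    have h1 : (inner ℝ m (J y u) : ℝ) = inner ℝ (ContinuousLinearMap.adjoint (J y) m) u := by
      rw [ContinuousLinearMap.adjoint_inner_left]
    have h2 : (inner ℝ (ContinuousLinearMap.adjoint (J y) m) u : ℝ)
        = inner ℝ e u - (lam * ‖u‖ ^ (p - 2)) * inner ℝ u u := by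
      rw [hadj, inner_sub_left, real_inner_smul_left]
    have h3 : (inner ℝ e u : ℝ) ≤ lam / 2 * ‖u‖ ^ p := by
      calc (inner ℝ e u : ℝ) ≤ ‖e‖ * ‖u‖ := real_inner_le_norm e u
        _ ≤ lam / 2 * ‖u‖ ^ (p - 1) * ‖u‖ := by
            apply mul_le_mul_of_nonneg_right he_bound hu0
        _ = lam / 2 * ‖u‖ ^ p := by rw [mul_assoc, hpow1]
    have h4 : (inner ℝ u u : ℝ) = ‖u‖ ^ (2:ℕ) := real_inner_self_eq_norm_sq u
    have h5 : (lam * ‖u‖ ^ (p - 2)) * inner ℝ u u = lam * ‖u‖ ^ p := by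
      rw [h4, mul_assoc, hpow2]
    rw [h1, h2, h5]
    linarith
  -- ‖m‖ ≤ ‖F y‖ - μ ‖u‖^p
  have hmsq : ‖m‖ ^ 2 ≤ ‖F y‖ * ‖m‖ - lam / 2 * ‖u‖ ^ p := by
    have h1 : (‖m‖:ℝ) ^ 2 = inner ℝ m m := (real_inner_self_eq_norm_sq m).symm
    have h2 : (inner ℝ m m : ℝ) = inner ℝ (F y) m + inner ℝ m (J y u) := by
      nth_rewrite 1 [hm]
      rw [inner_add_left, real_inner_comm (J y u) m]
    have h3 : (inner ℝ (F y) m : ℝ) ≤ ‖F y‖ * ‖m‖ := real_inner_le_norm _ _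
    rw [h1, h2]
    linarith [hinner]
  have hmnorm : ‖m‖ ≤ ‖F y‖ - μ * ‖u‖ ^ p := by
    have hm0 : (0:ℝ) ≤ ‖m‖ := norm_nonneg m
    have hl : lam / 2 * ‖u‖ ^ p = μ * ‖F y‖ * ‖u‖ ^ p := by rw [hlam]; ring
    rw [hl] at hmsq
    nlinarith [sq_nonneg (‖F y‖ - ‖m‖), mul_pos hμ hFy]
  -- Taylor bound
  have htaylor : ‖F (y + u) - m‖ ≤ L / 2 * ‖u‖ ^ 2 := by
    have := gn_taylor_aux F J hF L hL.le hlip y u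
    simpa [hm, sub_sub] using this
  clear_value lam m e
  constructor
  · -- first bound
    have h1 : ‖F (y + u)‖ ≤ ‖m‖ + L / 2 * ‖u‖ ^ 2 := by
      calc ‖F (y + u)‖ = ‖m + (F (y + u) - m)‖ := by rw [add_sub_cancel]
        _ ≤ ‖m‖ + ‖F (y + u) - m‖ := norm_add_le _ _
        _ ≤ ‖m‖ + L / 2 * ‖u‖ ^ 2 := by linarith
    linarith
  · -- gradient bound
    have hdecomp : ContinuousLinearMap.adjoint (J (y + u)) (F (y + u)) =
        ContinuousLinearMap.adjoint (J (y + u)) (F (y + u) - m)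
        + (ContinuousLinearMap.adjoint (J (y + u)) - ContinuousLinearMap.adjoint (J y)) m
        + ContinuousLinearMap.adjoint (J y) m := by
      rw [map_sub, ContinuousLinearMap.sub_apply]
      abel
    have hterm1 : ‖ContinuousLinearMap.adjoint (J (y + u)) (F (y + u) - m)‖ ≤
        σ * (L / 2 * ‖u‖ ^ 2) := by
      calc ‖ContinuousLinearMap.adjoint (J (y + u)) (F (y + u) - m)‖
          ≤ ‖ContinuousLinearMap.adjoint (J (y + u))‖ * ‖F (y + u) - m‖ :=
            ContinuousLinearMap.le_opNorm _ _
        _ ≤ σ * (L / 2 * ‖u‖ ^ 2) := by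
            apply mul_le_mul _ htaylor (norm_nonneg _) hσ.le
            rw [LinearIsometryEquiv.norm_map]
            exact hJbdd _
    have hterm2 : ‖(ContinuousLinearMap.adjoint (J (y + u)) -
        ContinuousLinearMap.adjoint (J y)) m‖ ≤ L * ‖u‖ * ‖F y‖ := by
      have hm_le : ‖m‖ ≤ ‖F y‖ := by nlinarith [mul_pos hμ hFy]
      have hJd : ‖ContinuousLinearMap.adjoint (J (y + u)) -
          ContinuousLinearMap.adjoint (J y)‖ ≤ L * ‖u‖ := by
        rw [← map_sub, LinearIsometryEquiv.norm_map]
        simpa using hlip (y + u) y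
      calc ‖(ContinuousLinearMap.adjoint (J (y + u)) - ContinuousLinearMap.adjoint (J y)) m‖
          ≤ ‖ContinuousLinearMap.adjoint (J (y + u)) - ContinuousLinearMap.adjoint (J y)‖ * ‖m‖ :=
            ContinuousLinearMap.le_opNorm _ _
        _ ≤ L * ‖u‖ * ‖F y‖ := by
            apply mul_le_mul hJd hm_le (norm_nonneg _) (by positivity)
    have hterm3 : ‖ContinuousLinearMap.adjoint (J y) m‖ ≤ 3 * μ * ‖F y‖ * ‖u‖ ^ (p - 1) := by
      rw [hadj]
      calc ‖e - (lam * ‖u‖ ^ (p - 2)) • u‖ ≤ ‖e‖ + ‖(lam * ‖u‖ ^ (p - 2)) • u‖ :=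
            norm_sub_le _ _
        _ ≤ lam / 2 * ‖u‖ ^ (p - 1) + lam * ‖u‖ ^ (p - 1) := by
            have : ‖(lam * ‖u‖ ^ (p - 2)) • u‖ = lam * ‖u‖ ^ (p - 1) := by
              rw [norm_smul, Real.norm_eq_abs, abs_of_nonneg (by positivity), mul_assoc, hpow3]
            linarith [he_bound]
        _ = 3 * μ * ‖F y‖ * ‖u‖ ^ (p - 1) := by rw [hlam]; ring
    calc ‖ContinuousLinearMap.adjoint (J (y + u)) (F (y + u))‖
        ≤ ‖ContinuousLinearMap.adjoint (J (y + u)) (F (y + u) - m)‖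
          + ‖(ContinuousLinearMap.adjoint (J (y + u)) - ContinuousLinearMap.adjoint (J y)) m‖
          + ‖ContinuousLinearMap.adjoint (J y) m‖ := by
          rw [hdecomp]; exact norm_add₃_le
      _ ≤ σ * (L / 2 * ‖u‖ ^ 2) + L * ‖u‖ * ‖F y‖ + 3 * μ * ‖F y‖ * ‖u‖ ^ (p - 1) := by
          linarith
      _ = ‖F y‖ * (L * ‖u‖ + 3 * μ * ‖u‖ ^ (p - 1)) + L * σ / 2 * ‖u‖ ^ 2 := by ring



/-- One-step bounds for the higher-order regularized Gauss–Newton method: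
`‖F_{i+1}‖ - ‖F_i‖ ≤ (L/2)‖s_i‖² - μ_i‖s_i‖^p` and
`‖∇f(x_{i+1})‖ ≤ ‖F_i‖ (L‖s_i‖ + 3μ_i‖s_i‖^{p-1}) + (Lσ/2)‖s_i‖²`,
where `f(x) = ½‖F(x)‖²` so that `∇f(x) = J(x)ᵀ F(x)`. -/
theorem gn_step_bounds
    {E V : Type*} [NormedAddCommGroup E] [InnerProductSpace ℝ E] [CompleteSpace E]
    [NormedAddCommGroup V] [InnerProductSpace ℝ V] [CompleteSpace V]
    (F : E → V) (J : E → E →L[ℝ] V)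
    (hF : ∀ y, HasFDerivAt F (J y) y)
    (L σ : ℝ) (hL : 0 < L) (hσ : 0 < σ)
    (hlip : ∀ y z, ‖J y - J z‖ ≤ L * ‖y - z‖)
    (hJbdd : ∀ y, ‖J y‖ ≤ σ)
    (p : ℝ) (hp : 2 < p)
    (mu : ℕ → ℝ) (hmu : ∀ k, 0 < mu k)
    (x s : ℕ → E)
    (hx : ∀ k, x (k + 1) = x k + s k)
    (hFpos : ∀ k, 0 < ‖F (x k)‖)
    (lam : ℕ → ℝ) (hlamdef : ∀ k, lam k = 2 * mu k * ‖F (x k)‖)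
    (hopt : ∀ k,
      ‖ContinuousLinearMap.adjoint (J (x k)) (F (x k) + J (x k) (s k)) +
          (lam k * ‖s k‖ ^ (p - 2)) • s k‖ ≤ lam k / 2 * ‖s k‖ ^ (p - 1))
    (i : ℕ) :
    ‖F (x (i + 1))‖ - ‖F (x i)‖ ≤ L / 2 * ‖s i‖ ^ 2 - mu i * ‖s i‖ ^ p ∧
      ‖ContinuousLinearMap.adjoint (J (x (i + 1))) (F (x (i + 1)))‖ ≤
        ‖F (x i)‖ * (L * ‖s i‖ + 3 * mu i * ‖s i‖ ^ (p - 1)) + L * σ / 2 * ‖s i‖ ^ 2 := by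
  have hopt' := hopt i
  rw [hlamdef i] at hopt'
  have h := gn_key F J hF L σ hL hσ hlip hJbdd p hp (mu i) (hmu i) (x i) (s i) (hFpos i) hopt'
  rw [hx i]
  exact h
end

section
/- For every k ≥ 1, defining A_k := 2‖F_0‖ + L ∑_{i=0}^{k−1} (L/μ_i)^{2/(p−2)}, one has min_{1 ≤ i ≤ k} ‖∇f(x_i)‖ ≤ (2 A_k^{2−1/p}/k) · (∑_{i=0}^{k−1} μ_i)^{1/p} + σ A_k/(2k), for any choice of positive parameters μ_0, …, μ_{k−1}, where f(x) = ½‖F(x)‖². -/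
open intervalIntegral in
lemma gn_taylor_quad {E V : Type*} [NormedAddCommGroup E] [NormedSpace ℝ E]
    [NormedAddCommGroup V] [NormedSpace ℝ V] [CompleteSpace V]
    (F : E → V) (J : E → E →L[ℝ] V) (hF : ∀ y, HasFDerivAt F (J y) y)
    (L : ℝ) (hL : 0 ≤ L) (hlip : ∀ y z, ‖J y - J z‖ ≤ L * ‖y - z‖)
    (y s : E) : ‖F (y + s) - F y - J y s‖ ≤ L / 2 * ‖s‖ ^ 2 := by
  have hJcont : Continuous J := by
    refine (LipschitzWith.of_dist_le_mul (K := Real.toNNReal L) fun a b => ?_).continuous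
    rw [dist_eq_norm, dist_eq_norm]
    exact le_trans (hlip a b)
      (mul_le_mul_of_nonneg_right (Real.le_coe_toNNReal L) (norm_nonneg _))
  set d : ℝ → V := fun t => (J (y + t • s) - J y) s with hd
  have hderiv : ∀ t : ℝ, HasDerivAt (fun t : ℝ => F (y + t • s) - t • (J y s)) (d t) t := by
    intro t
    have h1 : HasDerivAt (fun t : ℝ => y + t • s) s t := by
      simpa using ((hasDerivAt_id t).smul_const s).const_add y
    have h2 : HasDerivAt (fun t : ℝ => F (y + t • s)) (J (y + t • s) s) t :=
      (hF (y + t • s)).comp_hasDerivAt t h1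
    have h3 : HasDerivAt (fun t : ℝ => t • (J y s)) (J y s) t := by
      simpa using (hasDerivAt_id t).smul_const (J y s)
    have h4 := h2.sub h3
    simp only [hd, ContinuousLinearMap.sub_apply]
    exact h4
  have hdcont : Continuous d := by
    have : Continuous fun t : ℝ => J (y + t • s) - J y :=
      (hJcont.comp (by continuity)).sub continuous_const
    exact this.clm_apply continuous_const
  have hint : ∫ t in (0:ℝ)..1, d t = (F (y + s) - (1:ℝ) • (J y s)) - (F (y + 0 • s) - (0:ℝ) • (J y s)) := by
    have := integral_eq_sub_of_hasDerivAt (f := fun t : ℝ => F (y + t • s) - t • (J y s))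
      (f' := d) (a := 0) (b := 1) (fun t _ => hderiv t) (hdcont.intervalIntegrable 0 1)
    simpa using this
  have hbound : ‖∫ t in (0:ℝ)..1, d t‖ ≤ L / 2 * ‖s‖ ^ 2 := by
    have h := intervalIntegral.norm_integral_le_of_norm_le (μ := MeasureTheory.volume)
      (f := d) (g := fun t => L * ‖s‖ ^ 2 * t) (a := 0) (b := 1)
      (by norm_num) ?_ ?_
    · have heq : (∫ t in (0:ℝ)..1, L * ‖s‖ ^ 2 * t) = L / 2 * ‖s‖ ^ 2 := by
        rw [integral_const_mul, integral_id]; ring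
      rw [heq] at h
      calc ‖∫ t in (0:ℝ)..1, d t‖ ≤ |L / 2 * ‖s‖ ^ 2| := h.trans (le_abs_self _)
        _ = L / 2 * ‖s‖ ^ 2 := abs_of_nonneg (by positivity)
    · filter_upwards with t ht
      have h1 : ‖d t‖ ≤ ‖J (y + t • s) - J y‖ * ‖s‖ := (J (y + t • s) - J y).le_opNorm s
      have h2 : ‖J (y + t • s) - J y‖ ≤ L * (t * ‖s‖) := by
        have := hlip (y + t • s) y
        simpa [norm_smul, abs_of_nonneg (le_of_lt ht.1)] using this
      calc ‖d t‖ ≤ L * (t * ‖s‖) * ‖s‖ :=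
            h1.trans (mul_le_mul_of_nonneg_right h2 (norm_nonneg _))
        _ = L * ‖s‖ ^ 2 * t := by ring
    · exact (by continuity : Continuous fun t : ℝ => L * ‖s‖ ^ 2 * t).intervalIntegrable 0 1
  rw [hint] at hbound
  simpa [sub_right_comm] using hbound

lemma gn_young {L m p u : ℝ} (hL : 0 < L) (hm : 0 < m) (hp : 2 < p) (hu : 0 ≤ u) :
    L / 2 * u ^ 2 ≤ m / 2 * u ^ p + L / 2 * (L / m) ^ (2 / (p - 2)) := by
  have hp2 : (0:ℝ) < p - 2 := by linarith
  set t2 : ℝ := (L / m) ^ (2 / (p - 2)) with ht2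
  have ht2pos : 0 < t2 := Real.rpow_pos_of_pos (div_pos hL hm) _
  rcases le_or_gt (u ^ 2) t2 with h | h
  · have : 0 ≤ m / 2 * u ^ p := by positivity
    nlinarith
  · have hu0 : 0 < u := by
      rcases eq_or_lt_of_le hu with h0 | h0
      · exfalso; rw [← h0] at h; simp at h; linarith
      · exact h0
    have h1 : (L / m) ≤ u ^ (p - 2) := by
      have e1 : t2 ^ ((p - 2) / 2) = L / m := by
        rw [ht2, ← Real.rpow_mul (le_of_lt (div_pos hL hm))]
        rw [show (2 / (p - 2)) * ((p - 2) / 2) = 1 by field_simp]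
        exact Real.rpow_one _
      have e2 : (u ^ 2) ^ ((p - 2) / 2) = u ^ (p - 2) := by
        rw [← Real.rpow_natCast u 2, ← Real.rpow_mul hu]
        push_cast
        ring_nf
      calc L / m = t2 ^ ((p - 2) / 2) := e1.symm
        _ ≤ (u ^ 2) ^ ((p - 2) / 2) :=
            Real.rpow_le_rpow (le_of_lt ht2pos) (le_of_lt h) (by positivity)
        _ = u ^ (p - 2) := e2
    have h2 : u ^ p = u ^ (p - 2) * u ^ 2 := by
      rw [← Real.rpow_natCast u 2, ← Real.rpow_add hu0]
      push_cast
      ring_nf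
    have h3 : L / m * u ^ 2 ≤ u ^ (p - 2) * u ^ 2 :=
      mul_le_mul_of_nonneg_right h1 (by positivity)
    have h4 : L / 2 * u ^ 2 ≤ m / 2 * u ^ p := by
      rw [h2]
      have := mul_le_mul_of_nonneg_left h3 (le_of_lt (half_pos hm))
      calc L / 2 * u ^ 2 = m / 2 * (L / m * u ^ 2) := by field_simp
        _ ≤ m / 2 * (u ^ (p - 2) * u ^ 2) := this
    nlinarith

lemma gn_eq_of_log {x y : ℝ} (hx : 0 < x) (hy : 0 < y) (h : Real.log x = Real.log y) : x = y :=
  Real.log_injOn_pos (Set.mem_Ioi.mpr hx) (Set.mem_Ioi.mpr hy) h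

lemma gn_w {L m p : ℝ} (hL : 0 < L) (hm : 0 < m) (hp : 2 < p) :
    (L * (L / m) ^ (2 / (p - 2))) ^ ((p - 2) / p) = L * m ^ (-(2 / p)) := by
  have hp2 : (0:ℝ) < p - 2 := by linarith
  have hp0 : (0:ℝ) < p := by linarith
  have h1 : 0 < (L / m) ^ (2 / (p - 2)) := Real.rpow_pos_of_pos (div_pos hL hm) _
  apply gn_eq_of_log (by positivity) (by positivity)
  rw [Real.log_rpow (by positivity), Real.log_mul (ne_of_gt hL) (ne_of_gt h1),
    Real.log_rpow (div_pos hL hm), Real.log_div (ne_of_gt hL) (ne_of_gt hm),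
    Real.log_mul (ne_of_gt hL) (ne_of_gt (Real.rpow_pos_of_pos hm _)),
    Real.log_rpow hm]
  field_simp
  ring

lemma gn_holder2 {ι : Type*} (t : Finset ι) (a b : ι → ℝ) (ha : ∀ i ∈ t, 0 ≤ a i)
    (hb : ∀ i ∈ t, 0 ≤ b i) {α β : ℝ} (hα : 0 < α) (hβ : 0 ≤ β) (hab : α + β = 1) :
    ∑ i ∈ t, a i ^ α * b i ^ β ≤ (∑ i ∈ t, a i) ^ α * (∑ i ∈ t, b i) ^ β := by
  rcases eq_or_lt_of_le hβ with h0 | h0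
  · have hα1 : α = 1 := by linarith
    simp only [← h0, Real.rpow_zero, mul_one, hα1, Real.rpow_one]
    exact le_refl _
  · have hα1 : α < 1 := by linarith
    have hconj : Real.HolderConjugate (1 / α) (1 / β) := by
      refine ⟨?_, by positivity, by positivity⟩
      rw [one_div, one_div, inv_inv, inv_inv, inv_one]; exact hab
    have h := Real.inner_le_Lp_mul_Lq t (fun i => a i ^ α) (fun i => b i ^ β) hconj
    have e1 : ∀ i ∈ t, |a i ^ α| ^ (1 / α) = a i := fun i hi => by
      rw [abs_of_nonneg (Real.rpow_nonneg (ha i hi) α), ← Real.rpow_mul (ha i hi),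
        mul_one_div, div_self (ne_of_gt hα), Real.rpow_one]
    have e2 : ∀ i ∈ t, |b i ^ β| ^ (1 / β) = b i := fun i hi => by
      rw [abs_of_nonneg (Real.rpow_nonneg (hb i hi) β), ← Real.rpow_mul (hb i hi),
        mul_one_div, div_self (ne_of_gt h0), Real.rpow_one]
    rw [Finset.sum_congr rfl e1, Finset.sum_congr rfl e2, one_div_one_div, one_div_one_div] at h
    exact h

lemma gn_holder3 {ι : Type*} (t : Finset ι) (a b c : ι → ℝ) (ha : ∀ i ∈ t, 0 ≤ a i)
    (hb : ∀ i ∈ t, 0 ≤ b i) (hc : ∀ i ∈ t, 0 ≤ c i)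
    {α β γ : ℝ} (hα : 0 < α) (hβ : 0 ≤ β) (hγ : 0 ≤ γ) (habc : α + β + γ = 1) :
    ∑ i ∈ t, a i ^ α * b i ^ β * c i ^ γ ≤
      (∑ i ∈ t, a i) ^ α * (∑ i ∈ t, b i) ^ β * (∑ i ∈ t, c i) ^ γ := by
  rcases eq_or_lt_of_le hγ with h0 | h0
  · simp only [← h0, Real.rpow_zero, mul_one]
    exact gn_holder2 t a b ha hb hα hβ (by linarith)
  · set δ := α + β with hδ
    have hδpos : 0 < δ := by positivity
    set d : ι → ℝ := fun i => a i ^ (α / δ) * b i ^ (β / δ) with hd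
    have hd0 : ∀ i ∈ t, 0 ≤ d i := fun i hi =>
      mul_nonneg (Real.rpow_nonneg (ha i hi) _) (Real.rpow_nonneg (hb i hi) _)
    have hkey : ∀ i ∈ t, a i ^ α * b i ^ β * c i ^ γ = d i ^ δ * c i ^ γ := by
      intro i hi
      rw [hd]
      rw [Real.mul_rpow (Real.rpow_nonneg (ha i hi) _) (Real.rpow_nonneg (hb i hi) _),
        ← Real.rpow_mul (ha i hi), ← Real.rpow_mul (hb i hi),
        div_mul_cancel₀ _ (ne_of_gt hδpos), div_mul_cancel₀ _ (ne_of_gt hδpos)]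
    rw [Finset.sum_congr rfl hkey]
    have h1 : ∑ i ∈ t, d i ^ δ * c i ^ γ ≤ (∑ i ∈ t, d i) ^ δ * (∑ i ∈ t, c i) ^ γ :=
      gn_holder2 t d c hd0 hc hδpos hγ (by rw [hδ]; linarith)
    have h2 : ∑ i ∈ t, d i ≤ (∑ i ∈ t, a i) ^ (α / δ) * (∑ i ∈ t, b i) ^ (β / δ) :=
      gn_holder2 t a b ha hb (by positivity) (by positivity) (by field_simp; exact hδ.symm)
    have hsd0 : 0 ≤ ∑ i ∈ t, d i := Finset.sum_nonneg hd0
    have h3 : (∑ i ∈ t, d i) ^ δ ≤ (∑ i ∈ t, a i) ^ α * (∑ i ∈ t, b i) ^ β := by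
      calc (∑ i ∈ t, d i) ^ δ ≤
          ((∑ i ∈ t, a i) ^ (α / δ) * (∑ i ∈ t, b i) ^ (β / δ)) ^ δ :=
            Real.rpow_le_rpow hsd0 h2 (le_of_lt hδpos)
        _ = (∑ i ∈ t, a i) ^ α * (∑ i ∈ t, b i) ^ β := by
            rw [Real.mul_rpow (Real.rpow_nonneg (Finset.sum_nonneg ha) _)
              (Real.rpow_nonneg (Finset.sum_nonneg hb) _),
              ← Real.rpow_mul (Finset.sum_nonneg ha), ← Real.rpow_mul (Finset.sum_nonneg hb),
              div_mul_cancel₀ _ (ne_of_gt hδpos), div_mul_cancel₀ _ (ne_of_gt hδpos)]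
    calc ∑ i ∈ t, d i ^ δ * c i ^ γ ≤ (∑ i ∈ t, d i) ^ δ * (∑ i ∈ t, c i) ^ γ := h1
      _ ≤ (∑ i ∈ t, a i) ^ α * (∑ i ∈ t, b i) ^ β * (∑ i ∈ t, c i) ^ γ :=
          mul_le_mul_of_nonneg_right h3 (Real.rpow_nonneg (Finset.sum_nonneg hc) _)

set_option maxHeartbeats 1000000 in
open scoped RealInnerProductSpace in
/-- General gradient-norm bound for the higher-order regularized Gauss–Newton method:
for all `k ≥ 1`, with `A_k := 2‖F_0‖ + L ∑_{i<k} (L/μ_i)^{2/(p-2)}`,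
`min_{1 ≤ i ≤ k} ‖∇f(x_i)‖ ≤ (2 A_k^{2-1/p}/k) (∑_{i<k} μ_i)^{1/p} + σ A_k/(2k)`,
where `f(x) = ½‖F(x)‖²` so that `∇f(x) = J(x)ᵀ F(x)`. -/
theorem gn_rate_general
    {E V : Type*} [NormedAddCommGroup E] [InnerProductSpace ℝ E] [CompleteSpace E]
    [NormedAddCommGroup V] [InnerProductSpace ℝ V] [CompleteSpace V]
    (F : E → V) (J : E → E →L[ℝ] V)
    (hF : ∀ y, HasFDerivAt F (J y) y)
    (L σ : ℝ) (hL : 0 < L) (hσ : 0 < σ)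
    (hlip : ∀ y z, ‖J y - J z‖ ≤ L * ‖y - z‖)
    (hJbdd : ∀ y, ‖J y‖ ≤ σ)
    (p : ℝ) (hp : 2 < p)
    (mu : ℕ → ℝ) (hmu : ∀ k, 0 < mu k)
    (x s : ℕ → E)
    (hx : ∀ k, x (k + 1) = x k + s k)
    (hFpos : ∀ k, 0 < ‖F (x k)‖)
    (lam : ℕ → ℝ) (hlamdef : ∀ k, lam k = 2 * mu k * ‖F (x k)‖)
    (hopt : ∀ k,
      ‖ContinuousLinearMap.adjoint (J (x k)) (F (x k) + J (x k) (s k)) +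
          (lam k * ‖s k‖ ^ (p - 2)) • s k‖ ≤ lam k / 2 * ‖s k‖ ^ (p - 1))
    (k : ℕ) (hk : 1 ≤ k)
    (A : ℝ) (hA : A = 2 * ‖F (x 0)‖ + L * ∑ i ∈ Finset.range k, (L / mu i) ^ (2 / (p - 2))) :
    (Finset.Icc 1 k).inf' (Finset.nonempty_Icc.mpr hk)
        (fun i => ‖ContinuousLinearMap.adjoint (J (x i)) (F (x i))‖) ≤
      2 * A ^ (2 - 1 / p) / (k : ℝ) * (∑ i ∈ Finset.range k, mu i) ^ ((1 : ℝ) / p) +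
        σ * A / (2 * (k : ℝ)) := by
  have hp2 : (0:ℝ) < p - 2 := by linarith
  have hp0 : (0:ℝ) < p := by linarith
  have hp1 : (0:ℝ) < p - 1 := by linarith
  set Fn : ℕ → ℝ := fun i => ‖F (x i)‖ with hFn
  set u : ℕ → ℝ := fun i => ‖s i‖ with hu
  set t2 : ℕ → ℝ := fun i => (L / mu i) ^ (2 / (p - 2)) with ht2
  have hu0 : ∀ i, 0 ≤ u i := fun i => norm_nonneg _
  have ht2pos : ∀ i, 0 < t2 i := fun i => Real.rpow_pos_of_pos (div_pos hL (hmu i)) _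
  have hA' : A = 2 * Fn 0 + L * ∑ i ∈ Finset.range k, t2 i := hA
  have hApos : 0 < A := by
    rw [hA']
    have h1 : 0 < Fn 0 := hFpos 0
    have h2 : 0 ≤ ∑ i ∈ Finset.range k, t2 i :=
      Finset.sum_nonneg fun i _ => le_of_lt (ht2pos i)
    have : 0 ≤ L * ∑ i ∈ Finset.range k, t2 i := mul_nonneg (le_of_lt hL) h2
    linarith
  have hlampos : ∀ i, 0 < lam i := fun i => by
    rw [hlamdef i]; exact mul_pos (mul_pos two_pos (hmu i)) (hFpos i)
  -- step inequality (b) : ‖F_i + J_i s_i‖² ≤ Fn i ² − λ_i ‖s_i‖^p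
  have hb : ∀ i, ‖F (x i) + J (x i) (s i)‖ ^ 2 ≤ Fn i ^ 2 - lam i * u i ^ p := by
    intro i
    have hw := hopt i
    set w := ContinuousLinearMap.adjoint (J (x i)) (F (x i) + J (x i) (s i)) +
        (lam i * ‖s i‖ ^ (p - 2)) • s i with hwdef
    have hws : ⟪w, s i⟫ ≤ lam i / 2 * u i ^ (p - 1) * u i :=
      le_trans (real_inner_le_norm w (s i))
        (mul_le_mul_of_nonneg_right hw (norm_nonneg _))
    have hw1 : ⟪w, s i⟫ =
        ⟪F (x i) + J (x i) (s i), J (x i) (s i)⟫ + lam i * u i ^ (p - 2) * u i ^ 2 := by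
      rw [hwdef, inner_add_left, real_inner_smul_left,
        ContinuousLinearMap.adjoint_inner_left, real_inner_self_eq_norm_sq]
      try ring
    have hpow1 : u i ^ (p - 1) * u i = u i ^ p := by
      have h := Real.rpow_add' (hu0 i) (ne_of_gt (by linarith : (0:ℝ) < (p - 1) + 1))
      rw [Real.rpow_one] at h
      rw [← h]; norm_num
    have hpow2 : u i ^ (p - 2) * u i ^ 2 = u i ^ p := by
      have h := Real.rpow_add' (y := p - 2) (z := 2) (hu0 i)
        (ne_of_gt (by linarith : (0:ℝ) < (p - 2) + 2))
      have h2 : u i ^ ((2:ℝ)) = u i ^ (2:ℕ) := by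
        rw [← Real.rpow_natCast (u i) 2]; norm_num
      rw [h2] at h
      rw [← h]; norm_num
    have hinner : ⟪F (x i) + J (x i) (s i), J (x i) (s i)⟫ ≤ -(lam i / 2) * u i ^ p := by
      have hle := hws
      rw [hw1] at hle
      have e1 : lam i * u i ^ (p - 2) * u i ^ 2 = lam i * u i ^ p := by
        rw [mul_assoc, hpow2]
      have e2 : lam i / 2 * u i ^ (p - 1) * u i = lam i / 2 * u i ^ p := by
        rw [mul_assoc, hpow1]
      rw [e1, e2] at hle
      linarith
    have hexp : ‖F (x i) + J (x i) (s i)‖ ^ 2 =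
        Fn i ^ 2 + 2 * ⟪F (x i), J (x i) (s i)⟫ + ‖J (x i) (s i)‖ ^ 2 :=
      norm_add_sq_real _ _
    have hsplit : ⟪F (x i) + J (x i) (s i), J (x i) (s i)⟫ =
        ⟪F (x i), J (x i) (s i)⟫ + ‖J (x i) (s i)‖ ^ 2 := by
      rw [inner_add_left, real_inner_self_eq_norm_sq]
    linarith [hexp, hsplit, hinner, sq_nonneg ‖J (x i) (s i)‖]
  -- (c) : ‖F_i + J_i s_i‖ ≤ Fn i − μ_i ‖s_i‖^p
  have hmuF : ∀ i, mu i * u i ^ p ≤ Fn i / 2 := by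
    intro i
    have h0 : lam i * u i ^ p ≤ Fn i ^ 2 := by
      have := hb i
      nlinarith [sq_nonneg ‖F (x i) + J (x i) (s i)‖]
    rw [hlamdef i] at h0
    nlinarith [hFpos i]
  have hc : ∀ i, ‖F (x i) + J (x i) (s i)‖ ≤ Fn i - mu i * u i ^ p := by
    intro i
    have hY : 0 ≤ Fn i - mu i * u i ^ p := by
      have := hmuF i; have := hFpos i; linarith
    refine le_of_pow_le_pow_left₀ (n := 2) (by norm_num) hY ?_
    have hsq : (Fn i - mu i * u i ^ p) ^ 2 = Fn i ^ 2 - lam i * u i ^ p + (mu i * u i ^ p) ^ 2 := by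
      rw [hlamdef i]; ring
    nlinarith [hb i, sq_nonneg (mu i * u i ^ p)]
  -- (d) : descent
  have htaylor : ∀ i, ‖F (x i + s i) - F (x i) - J (x i) (s i)‖ ≤ L / 2 * u i ^ 2 :=
    fun i => gn_taylor_quad F J hF L (le_of_lt hL) hlip (x i) (s i)
  have hd : ∀ i, Fn (i + 1) ≤ Fn i - mu i * u i ^ p + L / 2 * u i ^ 2 := by
    intro i
    have h1 : Fn (i + 1) = ‖F (x i + s i)‖ := by simp only [hFn]; rw [hx i]
    have h2 : ‖F (x i + s i)‖ ≤ ‖F (x i) + J (x i) (s i)‖ +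
        ‖F (x i + s i) - F (x i) - J (x i) (s i)‖ := by
      have he : F (x i + s i) = (F (x i) + J (x i) (s i)) +
          (F (x i + s i) - F (x i) - J (x i) (s i)) := by abel
      calc ‖F (x i + s i)‖ = ‖(F (x i) + J (x i) (s i)) +
          (F (x i + s i) - F (x i) - J (x i) (s i))‖ := by rw [← he]
        _ ≤ _ := norm_add_le _ _
    have := hc i
    have := htaylor i
    rw [h1]
    linarith
  -- induction : key telescoping bound
  have hF2 : ∀ i, Fn i + ∑ j ∈ Finset.range i, (mu j / 2 * u j ^ p) ≤
      Fn 0 + L / 2 * ∑ j ∈ Finset.range i, t2 j := by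
    intro i
    induction i with
    | zero => simp
    | succ n ih =>
      rw [Finset.sum_range_succ, Finset.sum_range_succ]
      have hyoung := gn_young hL (hmu n) hp (hu0 n)
      have := hd n
      have ht2e : (L / mu n) ^ (2 / (p - 2)) = t2 n := rfl
      rw [ht2e] at hyoung
      linarith
  have hsum_t2_mono : ∀ i ≤ k, (∑ j ∈ Finset.range i, t2 j) ≤ ∑ j ∈ Finset.range k, t2 j := by
    intro i hik
    exact Finset.sum_le_sum_of_subset_of_nonneg (Finset.range_subset_range.mpr hik)
      (fun j _ _ => le_of_lt (ht2pos j))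
  have hAhalf : Fn 0 + L / 2 * ∑ j ∈ Finset.range k, t2 j = A / 2 := by
    rw [hA']; ring
  have hFle : ∀ i ≤ k, Fn i ≤ A / 2 := by
    intro i hik
    have h1 := hF2 i
    have h2 : 0 ≤ ∑ j ∈ Finset.range i, (mu j / 2 * u j ^ p) :=
      Finset.sum_nonneg fun j _ => mul_nonneg (by linarith [hmu j])
        (Real.rpow_nonneg (hu0 j) p)
    have h3 := hsum_t2_mono i hik
    have h4 : L / 2 * ∑ j ∈ Finset.range i, t2 j ≤ L / 2 * ∑ j ∈ Finset.range k, t2 j :=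
      mul_le_mul_of_nonneg_left h3 (by positivity)
    linarith [hAhalf]
  -- sum bounds
  set S : ℝ := ∑ i ∈ Finset.range k, mu i * u i ^ p with hSdef
  set T : ℝ := ∑ i ∈ Finset.range k, L * t2 i with hTdef
  set M : ℝ := ∑ i ∈ Finset.range k, mu i with hMdef
  have hS0 : 0 ≤ S := Finset.sum_nonneg fun i _ =>
    mul_nonneg (hmu i).le (Real.rpow_nonneg (hu0 i) p)
  have hT0 : 0 ≤ T := Finset.sum_nonneg fun i _ => mul_nonneg hL.le (ht2pos i).le
  have hM0 : 0 ≤ M := Finset.sum_nonneg fun i _ => le_of_lt (hmu i)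
  have hSA : S ≤ A := by
    have h1 := hF2 k
    have h2 : S = 2 * ∑ j ∈ Finset.range k, (mu j / 2 * u j ^ p) := by
      rw [hSdef, Finset.mul_sum]
      exact Finset.sum_congr rfl fun j _ => by ring
    have hFk : 0 < Fn k := hFpos k
    have := hAhalf
    rw [h2]
    linarith
  have hTA : T ≤ A := by
    have : T = L * ∑ i ∈ Finset.range k, t2 i := by rw [hTdef, Finset.mul_sum]
    rw [this]
    have h1 : 0 < Fn 0 := hFpos 0
    rw [hA']
    linarith
  -- per-step gradient bound
  have hGe : ∀ i, i < k → ‖ContinuousLinearMap.adjoint (J (x (i + 1))) (F (x (i + 1)))‖ ≤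
      A / 2 * (L * u i) + σ / 2 * (L * u i ^ 2) + 3 * A / 2 * (mu i * u i ^ (p - 1)) := by
    intro i hik
    have hx1 : x (i + 1) = x i + s i := hx i
    have hsplit : ContinuousLinearMap.adjoint (J (x (i + 1))) (F (x (i + 1))) =
        (ContinuousLinearMap.adjoint (J (x (i + 1))) - ContinuousLinearMap.adjoint (J (x i)))
          (F (x (i + 1)))
        + ContinuousLinearMap.adjoint (J (x i)) (F (x (i + 1)) - F (x i) - J (x i) (s i))
        + ContinuousLinearMap.adjoint (J (x i)) (F (x i) + J (x i) (s i)) := by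
      simp only [ContinuousLinearMap.sub_apply, map_sub, map_add]
      abel
    have hT1 : ‖(ContinuousLinearMap.adjoint (J (x (i + 1))) -
        ContinuousLinearMap.adjoint (J (x i))) (F (x (i + 1)))‖ ≤ L * u i * (A / 2) := by
      have h1 : ContinuousLinearMap.adjoint (J (x (i + 1))) -
          ContinuousLinearMap.adjoint (J (x i)) =
          ContinuousLinearMap.adjoint (J (x (i + 1)) - J (x i)) :=
        (map_sub (ContinuousLinearMap.adjoint (𝕜 := ℝ) (E := E) (F := V)) _ _).symm
      have h2 : ‖ContinuousLinearMap.adjoint (J (x (i + 1))) -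
          ContinuousLinearMap.adjoint (J (x i))‖ ≤ L * u i := by
        rw [h1, LinearIsometryEquiv.norm_map]
        have := hlip (x (i + 1)) (x i)
        have hxs : x (i + 1) - x i = s i := by rw [hx1]; abel
        rwa [hxs] at this
      calc ‖(ContinuousLinearMap.adjoint (J (x (i + 1))) -
            ContinuousLinearMap.adjoint (J (x i))) (F (x (i + 1)))‖ ≤
          ‖ContinuousLinearMap.adjoint (J (x (i + 1))) -
            ContinuousLinearMap.adjoint (J (x i))‖ * ‖F (x (i + 1))‖ :=
            ContinuousLinearMap.le_opNorm _ _
        _ ≤ L * u i * (A / 2) :=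
            mul_le_mul h2 (hFle (i + 1) (by omega)) (norm_nonneg _)
              (mul_nonneg hL.le (hu0 i))
    have hT2 : ‖ContinuousLinearMap.adjoint (J (x i))
        (F (x (i + 1)) - F (x i) - J (x i) (s i))‖ ≤ σ * (L / 2 * u i ^ 2) := by
      have h1 : ‖ContinuousLinearMap.adjoint (J (x i))‖ ≤ σ := by
        rw [LinearIsometryEquiv.norm_map]; exact hJbdd (x i)
      have h2 : ‖F (x (i + 1)) - F (x i) - J (x i) (s i)‖ ≤ L / 2 * u i ^ 2 := by
        rw [hx1]; exact htaylor i
      calc ‖ContinuousLinearMap.adjoint (J (x i)) (F (x (i + 1)) - F (x i) - J (x i) (s i))‖ ≤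
          ‖ContinuousLinearMap.adjoint (J (x i))‖ * ‖F (x (i + 1)) - F (x i) - J (x i) (s i)‖ :=
            ContinuousLinearMap.le_opNorm _ _
        _ ≤ σ * (L / 2 * u i ^ 2) := mul_le_mul h1 h2 (norm_nonneg _) hσ.le
    have hT3 : ‖ContinuousLinearMap.adjoint (J (x i)) (F (x i) + J (x i) (s i))‖ ≤
        3 / 2 * (lam i * u i ^ (p - 1)) := by
      have hw := hopt i
      have heq : ContinuousLinearMap.adjoint (J (x i)) (F (x i) + J (x i) (s i)) =
          (ContinuousLinearMap.adjoint (J (x i)) (F (x i) + J (x i) (s i)) +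
            (lam i * ‖s i‖ ^ (p - 2)) • s i) - (lam i * ‖s i‖ ^ (p - 2)) • s i := by
        abel
      have h2 : ‖(lam i * ‖s i‖ ^ (p - 2)) • s i‖ = lam i * u i ^ (p - 2) * u i := by
        rw [norm_smul, Real.norm_eq_abs, abs_of_nonneg
          (mul_nonneg (hlampos i).le (Real.rpow_nonneg (hu0 i) _))]
      have hpow : u i ^ (p - 2) * u i = u i ^ (p - 1) := by
        have h := Real.rpow_add' (y := p - 2) (z := 1) (hu0 i)
          (ne_of_gt (by linarith : (0:ℝ) < (p - 2) + 1))
        rw [Real.rpow_one] at h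
        rw [← h]; congr 1; ring
      have h3 : lam i * u i ^ (p - 2) * u i = lam i * u i ^ (p - 1) := by
        rw [mul_assoc, hpow]
      rw [heq]
      calc ‖(ContinuousLinearMap.adjoint (J (x i)) (F (x i) + J (x i) (s i)) +
            (lam i * ‖s i‖ ^ (p - 2)) • s i) - (lam i * ‖s i‖ ^ (p - 2)) • s i‖ ≤
          ‖ContinuousLinearMap.adjoint (J (x i)) (F (x i) + J (x i) (s i)) +
            (lam i * ‖s i‖ ^ (p - 2)) • s i‖ + ‖(lam i * ‖s i‖ ^ (p - 2)) • s i‖ :=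
            norm_sub_le _ _
        _ ≤ lam i / 2 * ‖s i‖ ^ (p - 1) + lam i * u i ^ (p - 1) := by
            rw [h2, h3]; exact add_le_add hw (le_refl _)
        _ = 3 / 2 * (lam i * u i ^ (p - 1)) := by
            have : ‖s i‖ ^ (p - 1) = u i ^ (p - 1) := rfl
            rw [this]; ring
    have hlamA : lam i * u i ^ (p - 1) ≤ A * (mu i * u i ^ (p - 1)) := by
      rw [hlamdef i]
      have h1 : ‖F (x i)‖ ≤ A / 2 := hFle i (by omega)
      have h2 : 0 ≤ mu i * u i ^ (p - 1) :=
        mul_nonneg (hmu i).le (Real.rpow_nonneg (hu0 i) _)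
      nlinarith
    calc ‖ContinuousLinearMap.adjoint (J (x (i + 1))) (F (x (i + 1)))‖ =
        ‖(ContinuousLinearMap.adjoint (J (x (i + 1))) - ContinuousLinearMap.adjoint (J (x i)))
          (F (x (i + 1)))
        + ContinuousLinearMap.adjoint (J (x i)) (F (x (i + 1)) - F (x i) - J (x i) (s i))
        + ContinuousLinearMap.adjoint (J (x i)) (F (x i) + J (x i) (s i))‖ := by rw [← hsplit]
      _ ≤ ‖(ContinuousLinearMap.adjoint (J (x (i + 1))) - ContinuousLinearMap.adjoint (J (x i)))
          (F (x (i + 1)))‖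
        + ‖ContinuousLinearMap.adjoint (J (x i)) (F (x (i + 1)) - F (x i) - J (x i) (s i))‖
        + ‖ContinuousLinearMap.adjoint (J (x i)) (F (x i) + J (x i) (s i))‖ := norm_add₃_le
      _ ≤ L * u i * (A / 2) + σ * (L / 2 * u i ^ 2) + 3 / 2 * (lam i * u i ^ (p - 1)) := by
          exact add_le_add (add_le_add hT1 hT2) hT3
      _ ≤ A / 2 * (L * u i) + σ / 2 * (L * u i ^ 2) + 3 * A / 2 * (mu i * u i ^ (p - 1)) := by
          have := hlamA
          nlinarith
  -- per-term identities for Hölder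
  have hid1 : ∀ i ∈ Finset.range k, L * u i =
      (mu i * u i ^ p) ^ (1 / p) * (L * t2 i) ^ ((p - 2) / p) * mu i ^ (1 / p) := by
    intro i _
    have hw := gn_w hL (hmu i) hp
    have ht2i : t2 i = (L / mu i) ^ (2 / (p - 2)) := rfl
    rw [ht2i, hw]
    rcases eq_or_lt_of_le (hu0 i) with h0 | h0
    · have hz : u i = 0 := h0.symm
      simp [hz, Real.zero_rpow (ne_of_gt hp0),
        Real.zero_rpow (ne_of_gt (show (0:ℝ) < 1 / p by positivity)),
        Real.zero_rpow (ne_of_gt (show (0:ℝ) < p⁻¹ by positivity))]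
    · have e1 : (mu i * u i ^ p) ^ (1 / p) = mu i ^ (1 / p) * u i := by
        rw [Real.mul_rpow (hmu i).le (Real.rpow_nonneg (hu0 i) p),
          ← Real.rpow_mul (hu0 i), mul_one_div, div_self (ne_of_gt hp0), Real.rpow_one]
      rw [e1]
      have e2 : mu i ^ (1 / p) * (mu i ^ (-(2 / p)) * mu i ^ (1 / p)) = 1 := by
        rw [← Real.rpow_add (hmu i), ← Real.rpow_add (hmu i),
          show 1 / p + (-(2 / p) + 1 / p) = 0 by ring, Real.rpow_zero]
      symm
      calc (mu i ^ (1 / p) * u i) * (L * mu i ^ (-(2 / p))) * mu i ^ (1 / p)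
          = L * u i * (mu i ^ (1 / p) * (mu i ^ (-(2 / p)) * mu i ^ (1 / p))) := by ring
        _ = L * u i := by rw [e2, mul_one]
  have hid2 : ∀ i ∈ Finset.range k, L * u i ^ 2 =
      (mu i * u i ^ p) ^ (2 / p) * (L * t2 i) ^ ((p - 2) / p) * mu i ^ (0:ℝ) := by
    intro i _
    have hw := gn_w hL (hmu i) hp
    have ht2i : t2 i = (L / mu i) ^ (2 / (p - 2)) := rfl
    rw [ht2i, hw, Real.rpow_zero, mul_one]
    have e1 : (mu i * u i ^ p) ^ (2 / p) = mu i ^ (2 / p) * u i ^ 2 := by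
      rw [Real.mul_rpow (hmu i).le (Real.rpow_nonneg (hu0 i) p),
        ← Real.rpow_mul (hu0 i), show p * (2 / p) = 2 by field_simp,
        show ((2:ℝ)) = (((2:ℕ)):ℝ) by norm_num, Real.rpow_natCast]
    rw [e1]
    have e2 : mu i ^ (2 / p) * mu i ^ (-(2 / p)) = 1 := by
      rw [← Real.rpow_add (hmu i), show 2 / p + -(2 / p) = 0 by ring, Real.rpow_zero]
    symm
    calc mu i ^ (2 / p) * u i ^ 2 * (L * mu i ^ (-(2 / p)))
        = L * u i ^ 2 * (mu i ^ (2 / p) * mu i ^ (-(2 / p))) := by ring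
      _ = L * u i ^ 2 := by rw [e2, mul_one]
  have hid3 : ∀ i ∈ Finset.range k, mu i * u i ^ (p - 1) =
      (mu i * u i ^ p) ^ ((p - 1) / p) * (L * t2 i) ^ (0:ℝ) * mu i ^ (1 / p) := by
    intro i _
    rw [Real.rpow_zero, mul_one]
    have e1 : (mu i * u i ^ p) ^ ((p - 1) / p) = mu i ^ ((p - 1) / p) * u i ^ (p - 1) := by
      rw [Real.mul_rpow (hmu i).le (Real.rpow_nonneg (hu0 i) p),
        ← Real.rpow_mul (hu0 i), show p * ((p - 1) / p) = p - 1 by field_simp]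
    rw [e1]
    have e2 : mu i ^ ((p - 1) / p) * mu i ^ (1 / p) = mu i := by
      rw [← Real.rpow_add (hmu i), show (p - 1) / p + 1 / p = 1 by field_simp; ring, Real.rpow_one]
    symm
    calc mu i ^ ((p - 1) / p) * u i ^ (p - 1) * mu i ^ (1 / p)
        = (mu i ^ ((p - 1) / p) * mu i ^ (1 / p)) * u i ^ (p - 1) := by ring
      _ = mu i * u i ^ (p - 1) := by rw [e2]
  -- the three Hölder sum bounds
  have hMnn : ∀ i ∈ Finset.range k, (0:ℝ) ≤ mu i := fun i _ => (hmu i).le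
  have hann : ∀ i ∈ Finset.range k, (0:ℝ) ≤ mu i * u i ^ p := fun i _ =>
    mul_nonneg (hmu i).le (Real.rpow_nonneg (hu0 i) p)
  have hbnn : ∀ i ∈ Finset.range k, (0:ℝ) ≤ L * t2 i := fun i _ =>
    mul_nonneg hL.le (ht2pos i).le
  have hHS1 : ∑ i ∈ Finset.range k, L * u i ≤ A ^ (1 - 1 / p) * M ^ (1 / p) := by
    have h := gn_holder3 (Finset.range k) (fun i => mu i * u i ^ p) (fun i => L * t2 i) mu
      hann hbnn hMnn (α := 1 / p) (β := (p - 2) / p) (γ := 1 / p)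
      (by positivity) (by positivity) (by positivity) (by field_simp; try ring)
    rw [← Finset.sum_congr rfl hid1] at h
    have h2 : S ^ (1 / p) * T ^ ((p - 2) / p) * M ^ (1 / p) ≤
        A ^ (1 - 1 / p) * M ^ (1 / p) := by
      have hA1 : A ^ (1 - 1 / p) = A ^ (1 / p) * A ^ ((p - 2) / p) := by
        rw [← Real.rpow_add hApos]; congr 1; field_simp; ring
      rw [hA1]
      have hs1 : S ^ (1 / p) ≤ A ^ (1 / p) :=
        Real.rpow_le_rpow hS0 hSA (by positivity)
      have hs2 : T ^ ((p - 2) / p) ≤ A ^ ((p - 2) / p) :=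
        Real.rpow_le_rpow hT0 hTA (by positivity)
      have := mul_le_mul hs1 hs2 (Real.rpow_nonneg hT0 _) (Real.rpow_nonneg hApos.le _)
      exact mul_le_mul_of_nonneg_right this (Real.rpow_nonneg hM0 _)
    exact le_trans h h2
  have hHS2 : ∑ i ∈ Finset.range k, L * u i ^ 2 ≤ A := by
    have h := gn_holder3 (Finset.range k) (fun i => mu i * u i ^ p) (fun i => L * t2 i) mu
      hann hbnn hMnn (α := 2 / p) (β := (p - 2) / p) (γ := (0:ℝ))
      (by positivity) (by positivity) (le_refl 0) (by field_simp; ring)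
    rw [← Finset.sum_congr rfl hid2] at h
    have h2 : S ^ (2 / p) * T ^ ((p - 2) / p) * M ^ (0:ℝ) ≤ A := by
      rw [Real.rpow_zero, mul_one]
      have hs1 : S ^ (2 / p) ≤ A ^ (2 / p) :=
        Real.rpow_le_rpow hS0 hSA (by positivity)
      have hs2 : T ^ ((p - 2) / p) ≤ A ^ ((p - 2) / p) :=
        Real.rpow_le_rpow hT0 hTA (by positivity)
      have h3 := mul_le_mul hs1 hs2 (Real.rpow_nonneg hT0 _) (Real.rpow_nonneg hApos.le _)
      have h4 : A ^ (2 / p) * A ^ ((p - 2) / p) = A := by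
        rw [← Real.rpow_add hApos, show 2 / p + (p - 2) / p = 1 by field_simp; ring, Real.rpow_one]
      rw [← h4]; exact h3
    exact le_trans h h2
  have hHS3 : ∑ i ∈ Finset.range k, mu i * u i ^ (p - 1) ≤ A ^ (1 - 1 / p) * M ^ (1 / p) := by
    have h := gn_holder3 (Finset.range k) (fun i => mu i * u i ^ p) (fun i => L * t2 i) mu
      hann hbnn hMnn (α := (p - 1) / p) (β := (0:ℝ)) (γ := 1 / p)
      (by positivity) (le_refl 0) (by positivity) (by field_simp; try ring)
    rw [← Finset.sum_congr rfl hid3] at h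
    have h2 : S ^ ((p - 1) / p) * T ^ (0:ℝ) * M ^ (1 / p) ≤ A ^ (1 - 1 / p) * M ^ (1 / p) := by
      rw [Real.rpow_zero, mul_one]
      have hs1 : S ^ ((p - 1) / p) ≤ A ^ ((p - 1) / p) :=
        Real.rpow_le_rpow hS0 hSA (by positivity)
      have he : A ^ (1 - 1 / p) = A ^ ((p - 1) / p) := by congr 1; field_simp
      rw [he]
      exact mul_le_mul_of_nonneg_right hs1 (Real.rpow_nonneg hM0 _)
    exact le_trans h h2
  -- assembling
  set G : ℕ → ℝ := fun i => ‖ContinuousLinearMap.adjoint (J (x i)) (F (x i))‖ with hG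
  have hsum1 : ∑ i ∈ Finset.Icc 1 k, G i = ∑ i ∈ Finset.range k, G (i + 1) := by
    rw [← Finset.Ico_add_one_right_eq_Icc, Finset.sum_Ico_eq_sum_range]
    simp [Nat.add_comm]
  have hsum2 : ∑ i ∈ Finset.range k, G (i + 1) ≤
      A / 2 * ∑ i ∈ Finset.range k, (L * u i) +
      σ / 2 * ∑ i ∈ Finset.range k, (L * u i ^ 2) +
      3 * A / 2 * ∑ i ∈ Finset.range k, (mu i * u i ^ (p - 1)) := by
    rw [Finset.mul_sum, Finset.mul_sum, Finset.mul_sum, ← Finset.sum_add_distrib,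
      ← Finset.sum_add_distrib]
    refine Finset.sum_le_sum fun i hi => ?_
    exact hGe i (Finset.mem_range.mp hi)
  have hsum3 : ∑ i ∈ Finset.range k, G (i + 1) ≤
      2 * A ^ (2 - 1 / p) * M ^ (1 / p) + σ * A / 2 := by
    have hAA : A * (A ^ (1 - 1 / p)) = A ^ (2 - 1 / p) := by
      nth_rewrite 1 [← Real.rpow_one A]
      rw [← Real.rpow_add hApos]; congr 1; ring
    have b1 : A / 2 * ∑ i ∈ Finset.range k, (L * u i) ≤
        A / 2 * (A ^ (1 - 1 / p) * M ^ (1 / p)) :=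
      mul_le_mul_of_nonneg_left hHS1 (by positivity)
    have b2 : σ / 2 * ∑ i ∈ Finset.range k, (L * u i ^ 2) ≤ σ / 2 * A :=
      mul_le_mul_of_nonneg_left hHS2 (by positivity)
    have b3 : 3 * A / 2 * ∑ i ∈ Finset.range k, (mu i * u i ^ (p - 1)) ≤
        3 * A / 2 * (A ^ (1 - 1 / p) * M ^ (1 / p)) :=
      mul_le_mul_of_nonneg_left hHS3 (by positivity)
    have := hsum2
    have hend : A / 2 * (A ^ (1 - 1 / p) * M ^ (1 / p)) + σ / 2 * A +
        3 * A / 2 * (A ^ (1 - 1 / p) * M ^ (1 / p)) =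
        2 * A ^ (2 - 1 / p) * M ^ (1 / p) + σ * A / 2 := by
      rw [← hAA]; ring
    linarith
  set IN : ℝ := (Finset.Icc 1 k).inf' (Finset.nonempty_Icc.mpr hk) G with hIN
  have hmin : (k : ℝ) * IN ≤ ∑ i ∈ Finset.Icc 1 k, G i := by
    have h1 : ∑ _i ∈ Finset.Icc 1 k, IN ≤ ∑ i ∈ Finset.Icc 1 k, G i :=
      Finset.sum_le_sum fun i hi => Finset.inf'_le G hi
    rw [Finset.sum_const, Nat.card_Icc] at h1
    simpa [nsmul_eq_mul] using h1
  have hk0 : (0:ℝ) < (k : ℝ) := by exact_mod_cast Nat.lt_of_lt_of_le Nat.zero_lt_one hk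
  have hfinal : (k : ℝ) * IN ≤ 2 * A ^ (2 - 1 / p) * M ^ (1 / p) + σ * A / 2 := by
    calc (k : ℝ) * IN ≤ ∑ i ∈ Finset.Icc 1 k, G i := hmin
      _ = ∑ i ∈ Finset.range k, G (i + 1) := hsum1
      _ ≤ 2 * A ^ (2 - 1 / p) * M ^ (1 / p) + σ * A / 2 := hsum3
  have : IN ≤ (2 * A ^ (2 - 1 / p) * M ^ (1 / p) + σ * A / 2) / (k : ℝ) := by
    rw [le_div_iff₀ hk0]
    calc IN * (k : ℝ) = (k : ℝ) * IN := by ring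
      _ ≤ _ := hfinal
  calc IN ≤ (2 * A ^ (2 - 1 / p) * M ^ (1 / p) + σ * A / 2) / (k : ℝ) := this
    _ = 2 * A ^ (2 - 1 / p) / (k : ℝ) * M ^ (1 / p) + σ * A / (2 * (k : ℝ)) := by
      field_simp
end
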